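/- arXiv:1705.10704 — 3 statements merged into one kernel-verified Lean document; each statement's English description precedes it below -/
import Mathlib

section
/- Let λ ∈ (0,1) and for each integer n ≥ 1 let Bⁿ(z) = ((z−λ)/(1−λz))ⁿ. Then there exists a constant K = K(λ) > 0 such that for every n ≥ 1 and every integer k ≥ 0 the k-th Taylor coefficient at 0 of the function (1 − z²)·Bⁿ(z) has absolute value at most K/√n; that is, ‖(1−z²)Bⁿ‖_{l∞A} ≤ K/√n. -/
open MeasureTheory intervalIntegral Real Set Complex


lemma ibp_core (Ψ Ψ' Ψ'' g g' : ℝ → ℝ)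
    (hΨ : ∀ θ, HasDerivAt Ψ (Ψ' θ) θ)
    (hΨ' : ∀ θ, HasDerivAt Ψ' (Ψ'' θ) θ)
    (hΨ''c : Continuous Ψ'')
    (hg : ∀ θ, HasDerivAt g (g' θ) θ)
    (hg'c : Continuous g')
    (a b Λ : ℝ) (hΛ : 0 < Λ) (hab : a ≤ b) (hlen : b - a ≤ π)
    (hgb : ∀ θ ∈ Set.Icc a b, 0 ≤ g θ ∧ g θ ≤ 1 ∧ |g' θ| ≤ 1)
    (hpos : ∀ θ ∈ Set.Icc a b, Λ ≤ Ψ' θ)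
    (h2 : ∀ θ ∈ Set.Icc a b, Ψ'' θ ≤ 0) :
    ‖∫ θ in a..b, (g θ : ℂ) * Complex.exp (Ψ θ * Complex.I)‖ ≤ (3 + π) / Λ := by
  have hΨc : Continuous Ψ := continuous_iff_continuousAt.2 fun θ => (hΨ θ).continuousAt
  have hΨ'cc : Continuous Ψ' := continuous_iff_continuousAt.2 fun θ => (hΨ' θ).continuousAt
  have hgc : Continuous g := continuous_iff_continuousAt.2 fun θ => (hg θ).continuousAt
  have huI : Set.uIcc a b = Set.Icc a b := Set.uIcc_of_le hab
  have hne : ∀ θ ∈ Set.Icc a b, (Ψ' θ : ℂ) * Complex.I ≠ 0 := by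
    intro θ hθ
    have h1 : Λ ≤ Ψ' θ := hpos θ hθ
    have : (Ψ' θ : ℂ) ≠ 0 := by
      simp only [ne_eq, Complex.ofReal_eq_zero]; nlinarith
    simp [this, Complex.I_ne_zero]
  -- u, v, u', v'
  set u : ℝ → ℂ := fun θ => (g θ : ℂ) / ((Ψ' θ : ℂ) * Complex.I) with hu_def
  set v : ℝ → ℂ := fun θ => Complex.exp (Ψ θ * Complex.I) with hv_def
  set u' : ℝ → ℂ := fun θ =>
    ((g' θ : ℂ) * ((Ψ' θ : ℂ) * Complex.I) - (g θ : ℂ) * ((Ψ'' θ : ℂ) * Complex.I)) /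
      ((Ψ' θ : ℂ) * Complex.I) ^ 2 with hu'_def
  set v' : ℝ → ℂ := fun θ => ((Ψ' θ : ℂ) * Complex.I) * Complex.exp (Ψ θ * Complex.I) with hv'_def
  have hud : ∀ θ ∈ Set.uIcc a b, HasDerivAt u (u' θ) θ := by
    intro θ hθ
    rw [huI] at hθ
    exact ((hg θ).ofReal_comp).div (((hΨ' θ).ofReal_comp).mul_const Complex.I) (hne θ hθ)
  have hvd : ∀ θ ∈ Set.uIcc a b, HasDerivAt v (v' θ) θ := by
    intro θ _
    have h1 : HasDerivAt (fun t : ℝ => (Ψ t : ℂ) * Complex.I) ((Ψ' θ : ℂ) * Complex.I) θ :=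
      ((hΨ θ).ofReal_comp).mul_const Complex.I
    simpa [hv_def, hv'_def, mul_comm] using h1.cexp
  have hu'int : IntervalIntegrable u' volume a b := by
    apply ContinuousOn.intervalIntegrable
    rw [huI]
    apply ContinuousOn.div
    · fun_prop
    · fun_prop
    · intro θ hθ; exact pow_ne_zero 2 (hne θ hθ)
  have hv'int : IntervalIntegrable v' volume a b := by
    apply Continuous.intervalIntegrable; fun_prop
  have hibp := integral_mul_deriv_eq_deriv_mul hud hvd hu'int hv'int
  have hinteq : ∫ θ in a..b, (g θ : ℂ) * Complex.exp (Ψ θ * Complex.I)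
      = ∫ θ in a..b, u θ * v' θ := by
    apply intervalIntegral.integral_congr
    intro θ hθ
    rw [huI] at hθ
    simp only [hu_def, hv'_def]
    rw [div_mul_eq_mul_div, mul_comm ((Ψ' θ : ℂ) * Complex.I) (Complex.exp _), ← mul_assoc,
      mul_div_assoc, div_self (hne θ hθ), mul_one]
  have hv1 : ∀ θ : ℝ, ‖v θ‖ = 1 := by
    intro θ; simp [hv_def, Complex.norm_exp_ofReal_mul_I]
  have hΛ' : (0:ℝ) < 1/Λ := by positivity
  have hubound : ∀ θ ∈ Set.Icc a b, ‖u θ‖ ≤ 1/Λ := by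
    intro θ hθ
    obtain ⟨hg0, hg1, -⟩ := hgb θ hθ
    have hp := hpos θ hθ
    have hP : 0 < Ψ' θ := lt_of_lt_of_le hΛ hp
    show ‖(g θ : ℂ) / ((Ψ' θ : ℂ) * Complex.I)‖ ≤ 1/Λ
    rw [norm_div, norm_mul, Complex.norm_I, mul_one, Complex.norm_real, Complex.norm_real,
      Real.norm_eq_abs, Real.norm_eq_abs, _root_.abs_of_nonneg hg0, _root_.abs_of_pos hP]
    exact div_le_div₀ zero_le_one hg1 hΛ hp
  have hu'bound : ∀ θ ∈ Set.Icc a b, ‖u' θ‖ ≤ 1/Λ + (-Ψ'' θ)/(Ψ' θ)^2 := by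
    intro θ hθ
    obtain ⟨hg0, hg1, hg'1⟩ := hgb θ hθ
    have hp := hpos θ hθ
    have hP : 0 < Ψ' θ := lt_of_lt_of_le hΛ hp
    have h2' := h2 θ hθ
    have hval : ‖u' θ‖ = |g' θ * Ψ' θ - g θ * Ψ'' θ| / (Ψ' θ)^2 := by
      show ‖((g' θ : ℂ) * ((Ψ' θ : ℂ) * Complex.I) - (g θ : ℂ) * ((Ψ'' θ : ℂ) * Complex.I)) /
        ((Ψ' θ : ℂ) * Complex.I) ^ 2‖ = _
      have hnum : ((g' θ : ℂ) * ((Ψ' θ : ℂ) * Complex.I) - (g θ : ℂ) * ((Ψ'' θ : ℂ) * Complex.I))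
          = ((g' θ * Ψ' θ - g θ * Ψ'' θ : ℝ) : ℂ) * Complex.I := by push_cast; ring
      rw [hnum, norm_div, norm_mul, Complex.norm_I, mul_one, Complex.norm_real, norm_pow,
        norm_mul, Complex.norm_I, mul_one, Complex.norm_real, Real.norm_eq_abs,
        Real.norm_eq_abs, _root_.sq_abs]
    rw [hval]
    have habs : |g' θ * Ψ' θ - g θ * Ψ'' θ| ≤ Ψ' θ + -Ψ'' θ := by
      have h1 : |g' θ * Ψ' θ - g θ * Ψ'' θ| ≤ |g' θ| * |Ψ' θ| + |g θ| * |Ψ'' θ| := by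
        simpa [Real.norm_eq_abs] using norm_sub_le (g' θ * Ψ' θ) (g θ * Ψ'' θ)
      rw [_root_.abs_of_pos hP, _root_.abs_of_nonneg hg0, abs_of_nonpos h2'] at h1
      nlinarith [abs_nonneg (g' θ)]
    calc |g' θ * Ψ' θ - g θ * Ψ'' θ| / (Ψ' θ)^2 ≤ (Ψ' θ + -Ψ'' θ) / (Ψ' θ)^2 := by
          exact (div_le_div_iff_of_pos_right (pow_pos hP 2)).2 habs
      _ = 1/Ψ' θ + (-Ψ'' θ)/(Ψ' θ)^2 := by rw [add_div]; congr 1; rw [sq]; field_simp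
      _ ≤ 1/Λ + (-Ψ'' θ)/(Ψ' θ)^2 := by
          have : 1/Ψ' θ ≤ 1/Λ := one_div_le_one_div_of_le hΛ hp
          linarith
  -- FTC for the inverse of Ψ'
  have hftc : ∫ θ in a..b, (-Ψ'' θ/(Ψ' θ)^2) = (Ψ' b)⁻¹ - (Ψ' a)⁻¹ := by
    apply intervalIntegral.integral_eq_sub_of_hasDerivAt
    · intro θ hθ
      rw [huI] at hθ
      have hP : Ψ' θ ≠ 0 := (lt_of_lt_of_le hΛ (hpos θ hθ)).ne'
      exact (hΨ' θ).inv hP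
    · apply ContinuousOn.intervalIntegrable
      rw [huI]
      apply ContinuousOn.div (by fun_prop) (by fun_prop)
      intro θ hθ
      exact pow_ne_zero 2 (lt_of_lt_of_le hΛ (hpos θ hθ)).ne'
  have hint_u'norm : ∫ θ in a..b, ‖u' θ‖ ≤ (b-a) * (1/Λ) + 1/Λ := by
    have hint2 : IntervalIntegrable (fun θ => (-Ψ'' θ)/(Ψ' θ)^2) volume a b := by
      apply ContinuousOn.intervalIntegrable
      rw [huI]
      apply ContinuousOn.div (by fun_prop) (by fun_prop)
      intro θ hθ
      exact pow_ne_zero 2 (lt_of_lt_of_le hΛ (hpos θ hθ)).ne'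
    have hmono : ∫ θ in a..b, ‖u' θ‖ ≤ ∫ θ in a..b, (1/Λ + (-Ψ'' θ)/(Ψ' θ)^2) := by
      apply intervalIntegral.integral_mono_on hab
      · exact hu'int.norm
      · exact IntervalIntegrable.add intervalIntegrable_const hint2
      · exact hu'bound
    have hsplit : ∫ θ in a..b, (1/Λ + (-Ψ'' θ)/(Ψ' θ)^2)
        = (b-a) * (1/Λ) + ((Ψ' b)⁻¹ - (Ψ' a)⁻¹) := by
      rw [intervalIntegral.integral_add intervalIntegrable_const hint2,
        intervalIntegral.integral_const, hftc, smul_eq_mul]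
    have hend : (Ψ' b)⁻¹ - (Ψ' a)⁻¹ ≤ 1/Λ := by
      have hpb := hpos b ⟨hab, le_refl b⟩
      have hpa := hpos a ⟨le_refl a, hab⟩
      have h1 : (Ψ' b)⁻¹ ≤ 1/Λ := by
        rw [inv_eq_one_div]; exact one_div_le_one_div_of_le hΛ hpb
      have h2 : 0 < (Ψ' a)⁻¹ := by
        have : 0 < Ψ' a := lt_of_lt_of_le hΛ hpa
        positivity
      linarith
    linarith
  have hnormint : ‖∫ θ in a..b, u' θ * v θ‖ ≤ (b-a) * (1/Λ) + 1/Λ := by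
    calc ‖∫ θ in a..b, u' θ * v θ‖ ≤ ∫ θ in a..b, ‖u' θ * v θ‖ :=
          intervalIntegral.norm_integral_le_integral_norm hab
      _ = ∫ θ in a..b, ‖u' θ‖ := by
          apply intervalIntegral.integral_congr
          intro θ _
          show ‖u' θ * v θ‖ = ‖u' θ‖
          rw [norm_mul, hv1, mul_one]
      _ ≤ (b-a) * (1/Λ) + 1/Λ := hint_u'norm
  calc ‖∫ θ in a..b, (g θ : ℂ) * Complex.exp (Ψ θ * Complex.I)‖
      = ‖u b * v b - u a * v a - ∫ θ in a..b, u' θ * v θ‖ := by rw [hinteq, hibp]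
    _ ≤ ‖u b * v b - u a * v a‖ + ‖∫ θ in a..b, u' θ * v θ‖ := norm_sub_le _ _
    _ ≤ (‖u b‖ * ‖v b‖ + ‖u a‖ * ‖v a‖) + ((b-a) * (1/Λ) + 1/Λ) := by
        apply add_le_add ?_ hnormint
        calc ‖u b * v b - u a * v a‖ ≤ ‖u b * v b‖ + ‖u a * v a‖ := norm_sub_le _ _
          _ = ‖u b‖ * ‖v b‖ + ‖u a‖ * ‖v a‖ := by rw [norm_mul, norm_mul]
    _ ≤ (1/Λ + 1/Λ) + (π * (1/Λ) + 1/Λ) := by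
        apply add_le_add
        · rw [hv1, hv1, mul_one, mul_one]
          exact add_le_add (hubound b ⟨hab, le_refl b⟩) (hubound a ⟨le_refl a, hab⟩)
        · have h1 : (b-a) * (1/Λ) ≤ π * (1/Λ) := mul_le_mul_of_nonneg_right hlen hΛ'.le
          linarith
    _ = (3 + π)/Λ := by field_simp; ring

lemma ibp_core_neg (Ψ Ψ' Ψ'' : ℝ → ℝ)
    (hΨ : ∀ θ, HasDerivAt Ψ (Ψ' θ) θ)
    (hΨ' : ∀ θ, HasDerivAt Ψ' (Ψ'' θ) θ)
    (hΨ''c : Continuous Ψ'')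
    (a b Λ : ℝ) (hΛ : 0 < Λ) (hab : a ≤ b) (ha : 0 ≤ a) (hb : b ≤ π)
    (hneg : ∀ θ ∈ Set.Icc a b, Ψ' θ ≤ -Λ)
    (h2 : ∀ θ ∈ Set.Icc a b, Ψ'' θ ≤ 0) :
    ‖∫ θ in a..b, (Real.sin θ : ℂ) * Complex.exp (Ψ θ * Complex.I)‖ ≤ (3 + π) / Λ := by
  have hmem : ∀ θ ∈ Set.Icc a b, a + b - θ ∈ Set.Icc a b := by
    intro θ hθ
    exact ⟨by linarith [hθ.2], by linarith [hθ.1]⟩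
  have key := ibp_core (fun θ => Ψ (a + b - θ)) (fun θ => -Ψ' (a + b - θ))
    (fun θ => Ψ'' (a + b - θ)) (fun θ => Real.sin (a + b - θ)) (fun θ => -Real.cos (a + b - θ))
    (fun θ => by
      have hinner : HasDerivAt (fun x : ℝ => a + b - x) (-1) θ := by
        simpa using (hasDerivAt_id θ).const_sub (a + b)
      have := (hΨ (a + b - θ)).comp θ hinner
      simpa [mul_comm, Function.comp_def] using this)
    (fun θ => by
      have hinner : HasDerivAt (fun x : ℝ => a + b - x) (-1) θ := by
        simpa using (hasDerivAt_id θ).const_sub (a + b)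
      have := ((hΨ' (a + b - θ)).comp θ hinner).neg
      simpa [mul_comm, Function.comp_def, Pi.neg_def] using this)
    (hΨ''c.comp (by fun_prop))
    (fun θ => by
      have hinner : HasDerivAt (fun x : ℝ => a + b - x) (-1) θ := by
        simpa using (hasDerivAt_id θ).const_sub (a + b)
      have := (Real.hasDerivAt_sin (a + b - θ)).comp θ hinner
      simpa [mul_comm, Function.comp_def] using this)
    (by fun_prop)
    a b Λ hΛ hab (by linarith)
    (fun θ hθ => by
      have h1 := hmem θ hθ
      have h0 : 0 ≤ a + b - θ := le_trans ha h1.1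
      have hπ : a + b - θ ≤ π := le_trans h1.2 hb
      exact ⟨Real.sin_nonneg_of_nonneg_of_le_pi h0 hπ, Real.sin_le_one _,
        by rw [abs_neg]; exact Real.abs_cos_le_one _⟩)
    (fun θ hθ => by have h := hneg _ (hmem θ hθ); show Λ ≤ -Ψ' (a + b - θ); linarith)
    (fun θ hθ => h2 _ (hmem θ hθ))
  have hchg : ∫ θ in a..b, (Real.sin (a + b - θ) : ℂ) *
      Complex.exp (Ψ (a + b - θ) * Complex.I)
      = ∫ θ in a..b, (Real.sin θ : ℂ) * Complex.exp (Ψ θ * Complex.I) := by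
    have := intervalIntegral.integral_comp_sub_left
      (a := a) (b := b) (fun θ => (Real.sin θ : ℂ) * Complex.exp (Ψ θ * Complex.I)) (a + b)
    simpa using this
  rw [← hchg]
  exact key

lemma middle_bound (Ψ Ψ' Ψ'' : ℝ → ℝ)
    (hΨ : ∀ θ, HasDerivAt Ψ (Ψ' θ) θ)
    (hΨ' : ∀ θ, HasDerivAt Ψ' (Ψ'' θ) θ)
    (hΨ''c : Continuous Ψ'')
    (α β ρ Λ : ℝ) (hρ : 0 < ρ) (hαβ : α ≤ β) (hα : 0 ≤ α) (hβ : β ≤ π)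
    (hlow : ∀ θ ∈ Set.Icc α β, Ψ'' θ ≤ -ρ * Real.sin θ)
    (hdiff : Ψ' α - Ψ' β ≤ 2 * Λ) :
    ‖∫ θ in α..β, (Real.sin θ : ℂ) * Complex.exp (Ψ θ * Complex.I)‖ ≤ 2 * Λ / ρ := by
  have hΨc : Continuous Ψ := continuous_iff_continuousAt.2 fun θ => (hΨ θ).continuousAt
  have hsin : ∫ θ in α..β, Real.sin θ ≤ 2 * Λ / ρ := by
    have hftc : ∫ θ in α..β, (-Ψ'' θ) = Ψ' α - Ψ' β := by
      have : ∫ θ in α..β, (-Ψ'' θ) = -(Ψ' β - Ψ' α) := by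
        rw [intervalIntegral.integral_neg, intervalIntegral.integral_eq_sub_of_hasDerivAt
          (fun θ _ => hΨ' θ) (hΨ''c.intervalIntegrable α β)]
      linarith [this]
    have hmono : ρ * ∫ θ in α..β, Real.sin θ ≤ ∫ θ in α..β, (-Ψ'' θ) := by
      rw [← intervalIntegral.integral_const_mul]
      apply intervalIntegral.integral_mono_on hαβ
      · exact (continuous_const.mul Real.continuous_sin).intervalIntegrable α β
      · exact (hΨ''c.neg).intervalIntegrable α β
      · intro θ hθ
        have := hlow θ hθ
        linarith
    have h1 : ρ * ∫ θ in α..β, Real.sin θ ≤ 2 * Λ := by linarith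
    rw [le_div_iff₀ hρ]
    linarith
  calc ‖∫ θ in α..β, (Real.sin θ : ℂ) * Complex.exp (Ψ θ * Complex.I)‖
      ≤ ∫ θ in α..β, ‖(Real.sin θ : ℂ) * Complex.exp (Ψ θ * Complex.I)‖ :=
        intervalIntegral.norm_integral_le_integral_norm hαβ
    _ = ∫ θ in α..β, Real.sin θ := by
        apply intervalIntegral.integral_congr
        intro θ hθ
        rw [Set.uIcc_of_le hαβ] at hθ
        show ‖(Real.sin θ : ℂ) * Complex.exp (Ψ θ * Complex.I)‖ = Real.sin θ
        rw [norm_mul, Complex.norm_exp_ofReal_mul_I, mul_one, Complex.norm_real,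
          Real.norm_eq_abs, _root_.abs_of_nonneg]
        exact Real.sin_nonneg_of_nonneg_of_le_pi (le_trans hα hθ.1) (le_trans hθ.2 hβ)
    _ ≤ 2 * Λ / ρ := hsin

lemma osc_pi (Ψ Ψ' Ψ'' : ℝ → ℝ)
    (hΨ : ∀ θ, HasDerivAt Ψ (Ψ' θ) θ)
    (hΨ' : ∀ θ, HasDerivAt Ψ' (Ψ'' θ) θ)
    (hΨ''c : Continuous Ψ'')
    (ρ : ℝ) (hρ : 0 < ρ)
    (hlow : ∀ θ ∈ Set.Icc 0 π, Ψ'' θ ≤ -ρ * Real.sin θ) :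
    ‖∫ θ in (0:ℝ)..π, (Real.sin θ : ℂ) * Complex.exp (Ψ θ * Complex.I)‖
      ≤ (8 + 2*π) / Real.sqrt ρ := by
  have hπ := Real.pi_pos
  set Λ := Real.sqrt ρ with hΛdef
  have hΛ : 0 < Λ := Real.sqrt_pos.2 hρ
  have hΨc : Continuous Ψ := continuous_iff_continuousAt.2 fun θ => (hΨ θ).continuousAt
  have hΨ'cc : Continuous Ψ' := continuous_iff_continuousAt.2 fun θ => (hΨ' θ).continuousAt
  have h2 : ∀ θ ∈ Set.Icc (0:ℝ) π, Ψ'' θ ≤ 0 := by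
    intro θ hθ
    have h1 := hlow θ hθ
    have h2 := Real.sin_nonneg_of_nonneg_of_le_pi hθ.1 hθ.2
    nlinarith
  have hanti : AntitoneOn Ψ' (Set.Icc 0 π) := by
    apply antitoneOn_of_deriv_nonpos (convex_Icc 0 π) hΨ'cc.continuousOn
    · intro θ _
      exact (hΨ' θ).differentiableAt.differentiableWithinAt
    · intro θ hθ
      rw [interior_Icc] at hθ
      rw [(hΨ' θ).deriv]
      exact h2 θ ⟨hθ.1.le, hθ.2.le⟩
  -- reduce to the bound with Λ
  suffices h : ‖∫ θ in (0:ℝ)..π, (Real.sin θ : ℂ) * Complex.exp (Ψ θ * Complex.I)‖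
      ≤ 2 * ((3 + π)/Λ) + 2 * Λ / ρ by
    have hΛρ : 2 * Λ / ρ = 2 / Λ := by
      rw [hΛdef]
      rw [eq_div_iff (ne_of_gt hΛ)]
      rw [hΛdef, div_mul_eq_mul_div, mul_assoc, Real.mul_self_sqrt hρ.le]
      field_simp
    rw [hΛρ] at h
    calc ‖∫ θ in (0:ℝ)..π, (Real.sin θ : ℂ) * Complex.exp (Ψ θ * Complex.I)‖
        ≤ 2 * ((3 + π)/Λ) + 2 / Λ := h
      _ = (8 + 2*π)/Λ := by field_simp; ring
  have hbd : (0:ℝ) ≤ (3 + π)/Λ := by positivity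
  have hbd2 : (0:ℝ) ≤ 2 * Λ / ρ := by positivity
  have hcont : Continuous fun θ : ℝ => (Real.sin θ : ℂ) * Complex.exp (Ψ θ * Complex.I) := by
    fun_prop
  by_cases hA : Λ ≤ Ψ' π
  · -- Ψ' ≥ Λ everywhere
    have key := ibp_core Ψ Ψ' Ψ'' Real.sin Real.cos hΨ hΨ' hΨ''c
      (fun θ => Real.hasDerivAt_sin θ) Real.continuous_cos 0 π Λ hΛ hπ.le (by linarith)
      (fun θ hθ => ⟨Real.sin_nonneg_of_nonneg_of_le_pi hθ.1 hθ.2, Real.sin_le_one _,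
        Real.abs_cos_le_one _⟩)
      (fun θ hθ => le_trans hA (hanti hθ (Set.right_mem_Icc.2 hπ.le) hθ.2))
      h2
    linarith
  by_cases hB : Ψ' 0 ≤ -Λ
  · have key := ibp_core_neg Ψ Ψ' Ψ'' hΨ hΨ' hΨ''c 0 π Λ hΛ hπ.le (le_refl 0) (le_refl π)
      (fun θ hθ => le_trans (hanti (Set.left_mem_Icc.2 hπ.le) hθ hθ.1) hB)
      h2
    linarith
  push_neg at hA hB
  -- construct α
  obtain ⟨α, hαIcc, hαle, hαprop⟩ :
      ∃ α, α ∈ Set.Icc (0:ℝ) π ∧ Ψ' α ≤ Λ ∧ (α = 0 ∨ ∀ θ ∈ Set.Icc 0 α, Λ ≤ Ψ' θ) := by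
    by_cases hA0 : Ψ' 0 ≤ Λ
    · exact ⟨0, Set.left_mem_Icc.2 hπ.le, hA0, Or.inl rfl⟩
    · push_neg at hA0
      obtain ⟨α, hmem, hval⟩ := intermediate_value_Icc' hπ.le hΨ'cc.continuousOn
        (Set.mem_Icc.2 ⟨hA.le, hA0.le⟩)
      refine ⟨α, hmem, le_of_eq hval, Or.inr fun θ hθ => ?_⟩
      rw [← hval]
      exact hanti ⟨hθ.1, le_trans hθ.2 hmem.2⟩ hmem hθ.2
  -- construct β
  obtain ⟨β, hβIcc, hβge, hβprop⟩ :
      ∃ β, β ∈ Set.Icc (0:ℝ) π ∧ -Λ ≤ Ψ' β ∧ (β = π ∨ ∀ θ ∈ Set.Icc β π, Ψ' θ ≤ -Λ) := by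
    by_cases hBπ : -Λ ≤ Ψ' π
    · exact ⟨π, Set.right_mem_Icc.2 hπ.le, hBπ, Or.inl rfl⟩
    · push_neg at hBπ
      obtain ⟨β, hmem, hval⟩ := intermediate_value_Icc' hπ.le hΨ'cc.continuousOn
        (Set.mem_Icc.2 ⟨hBπ.le, hB.le⟩)
      refine ⟨β, hmem, le_of_eq hval.symm, Or.inr fun θ hθ => ?_⟩
      rw [← hval]
      exact hanti hmem ⟨le_trans hmem.1 hθ.1, hθ.2⟩ hθ.1
  have hαβ : α ≤ β := by
    rcases hαprop with h0 | hall
    · rw [h0]; exact hβIcc.1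
    rcases hβprop with hπ' | hall2
    · rw [hπ']; exact hαIcc.2
    by_contra hlt
    push_neg at hlt
    have h1 := hall β ⟨hβIcc.1, hlt.le⟩
    have h2' := hall2 β ⟨le_refl β, hβIcc.2⟩
    linarith
  -- split the integral
  have hsplit : ∫ θ in (0:ℝ)..π, (Real.sin θ : ℂ) * Complex.exp (Ψ θ * Complex.I)
      = (∫ θ in (0:ℝ)..α, (Real.sin θ : ℂ) * Complex.exp (Ψ θ * Complex.I))
        + (∫ θ in α..β, (Real.sin θ : ℂ) * Complex.exp (Ψ θ * Complex.I))
        + (∫ θ in β..π, (Real.sin θ : ℂ) * Complex.exp (Ψ θ * Complex.I)) := by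
    rw [← intervalIntegral.integral_add_adjacent_intervals (hcont.intervalIntegrable 0 α)
        (hcont.intervalIntegrable α π),
      ← intervalIntegral.integral_add_adjacent_intervals (hcont.intervalIntegrable α β)
        (hcont.intervalIntegrable β π), add_assoc]
  -- piece 1
  have hp1 : ‖∫ θ in (0:ℝ)..α, (Real.sin θ : ℂ) * Complex.exp (Ψ θ * Complex.I)‖
      ≤ (3 + π)/Λ := by
    rcases hαprop with h0 | hall
    · rw [h0]
      simp [intervalIntegral.integral_same]
      positivity
    · exact ibp_core Ψ Ψ' Ψ'' Real.sin Real.cos hΨ hΨ' hΨ''c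
        (fun θ => Real.hasDerivAt_sin θ) Real.continuous_cos 0 α Λ hΛ hαIcc.1
        (by linarith [hαIcc.2])
        (fun θ hθ => ⟨Real.sin_nonneg_of_nonneg_of_le_pi hθ.1 (le_trans hθ.2 hαIcc.2),
          Real.sin_le_one _, Real.abs_cos_le_one _⟩)
        hall
        (fun θ hθ => h2 θ ⟨hθ.1, le_trans hθ.2 hαIcc.2⟩)
  -- piece 3
  have hp3 : ‖∫ θ in β..π, (Real.sin θ : ℂ) * Complex.exp (Ψ θ * Complex.I)‖
      ≤ (3 + π)/Λ := by
    rcases hβprop with hπ' | hall2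
    · rw [hπ']
      simp [intervalIntegral.integral_same]
      positivity
    · exact ibp_core_neg Ψ Ψ' Ψ'' hΨ hΨ' hΨ''c β π Λ hΛ hβIcc.2 hβIcc.1 (le_refl π)
        hall2
        (fun θ hθ => h2 θ ⟨le_trans hβIcc.1 hθ.1, hθ.2⟩)
  -- piece 2
  have hp2 : ‖∫ θ in α..β, (Real.sin θ : ℂ) * Complex.exp (Ψ θ * Complex.I)‖
      ≤ 2 * Λ / ρ := by
    apply middle_bound Ψ Ψ' Ψ'' hΨ hΨ' hΨ''c α β ρ Λ hρ hαβ hαIcc.1 hβIcc.2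
    · intro θ hθ
      exact hlow θ ⟨le_trans hαIcc.1 hθ.1, le_trans hθ.2 hβIcc.2⟩
    · linarith
  rw [hsplit]
  calc ‖_ + _ + _‖ ≤ ‖(∫ θ in (0:ℝ)..α, (Real.sin θ : ℂ) * Complex.exp (Ψ θ * Complex.I))
        + (∫ θ in α..β, (Real.sin θ : ℂ) * Complex.exp (Ψ θ * Complex.I))‖
        + ‖∫ θ in β..π, (Real.sin θ : ℂ) * Complex.exp (Ψ θ * Complex.I)‖ := norm_add_le _ _
    _ ≤ ‖∫ θ in (0:ℝ)..α, (Real.sin θ : ℂ) * Complex.exp (Ψ θ * Complex.I)‖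
        + ‖∫ θ in α..β, (Real.sin θ : ℂ) * Complex.exp (Ψ θ * Complex.I)‖
        + ‖∫ θ in β..π, (Real.sin θ : ℂ) * Complex.exp (Ψ θ * Complex.I)‖ := by
          have := norm_add_le (∫ θ in (0:ℝ)..α, (Real.sin θ : ℂ) * Complex.exp (Ψ θ * Complex.I))
            (∫ θ in α..β, (Real.sin θ : ℂ) * Complex.exp (Ψ θ * Complex.I))
          linarith
    _ ≤ 2 * ((3 + π)/Λ) + 2 * Λ / ρ := by linarith


section Phase
variable (lam : ℝ)

noncomputable def Dd (θ : ℝ) : ℝ := 1 - 2*lam*Real.cos θ + lam^2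
noncomputable def ww (θ : ℝ) : ℝ := (1 - lam^2) / Dd lam θ
noncomputable def ww' (θ : ℝ) : ℝ := -((1 - lam^2) * (2*lam*Real.sin θ)) / (Dd lam θ)^2
noncomputable def phi (θ : ℝ) : ℝ := ∫ t in (0:ℝ)..θ, ww lam t

lemma hD_cont : Continuous (Dd lam) := by unfold Dd; fun_prop

variable (hlam : lam ∈ Set.Ioo (0:ℝ) 1)
include hlam

lemma hD_pos : ∀ θ, 0 < Dd lam θ := by
  intro θ
  have h1 := Real.cos_le_one θ
  have h2 := Real.neg_one_le_cos θ
  obtain ⟨h3, h4⟩ := hlam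
  unfold Dd
  nlinarith

lemma hw_cont : Continuous (ww lam) := by
  apply Continuous.div (by fun_prop) (hD_cont lam)
  intro θ; exact (hD_pos lam hlam θ).ne'

lemma hw'_cont : Continuous (ww' lam) := by
  apply Continuous.div (by fun_prop) ((hD_cont lam).pow 2)
  intro θ; exact pow_ne_zero 2 (hD_pos lam hlam θ).ne'

lemma hw_deriv : ∀ θ, HasDerivAt (ww lam) (ww' lam θ) θ := by
  intro θ
  have hDd : HasDerivAt (Dd lam) (2*lam*Real.sin θ) θ := by
    unfold Dd
    have h1 : HasDerivAt (fun t : ℝ => Real.cos t) (-Real.sin θ) θ := Real.hasDerivAt_cos θ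
    have h2 := ((h1.const_mul (2*lam)).const_sub 1).add_const (lam^2)
    simpa [mul_comm, mul_assoc, mul_left_comm] using h2
  have := (hasDerivAt_const θ (1 - lam^2)).div hDd (hD_pos lam hlam θ).ne'
  unfold ww ww'
  refine this.congr_deriv ?_
  ring

lemma hphi_deriv : ∀ θ, HasDerivAt (phi lam) (ww lam θ) θ := by
  intro θ
  have hcont := hw_cont lam hlam
  exact intervalIntegral.integral_hasDerivAt_right
    (hcont.intervalIntegrable 0 θ)
    (hcont.stronglyMeasurableAtFilter _ _)
    hcont.continuousAt

lemma hden_ne : ∀ θ : ℝ, (1 : ℂ) - lam * Complex.exp (θ * Complex.I) ≠ 0 := by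
  intro θ heq
  rw [sub_eq_zero] at heq
  have h1 : ‖(1:ℂ)‖ = ‖(lam:ℂ) * Complex.exp (θ * Complex.I)‖ := by rw [heq]
  rw [norm_one, norm_mul, Complex.norm_exp_ofReal_mul_I, mul_one, Complex.norm_real,
    Real.norm_eq_abs, _root_.abs_of_pos hlam.1] at h1
  linarith [hlam.2]

lemma hkey : ∀ θ : ℝ, ((Dd lam θ : ℝ) : ℂ) * Complex.exp (θ * Complex.I)
    = (Complex.exp (θ * Complex.I) - lam) * (1 - lam * Complex.exp (θ * Complex.I)) := by
  intro θ
  have h1 : Complex.exp (θ * Complex.I) * Complex.exp (-θ * Complex.I) = 1 := by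
    rw [← Complex.exp_add]; ring_nf; exact Complex.exp_zero
  have h2 : Complex.exp (θ * Complex.I) + Complex.exp (-(θ:ℂ) * Complex.I)
      = 2 * Complex.cos (θ:ℂ) := by
    rw [Complex.exp_mul_I, Complex.exp_mul_I, Complex.cos_neg, Complex.sin_neg]
    ring
  unfold Dd
  push_cast [Complex.ofReal_cos]
  linear_combination (lam : ℂ) * Complex.exp (θ * Complex.I) * h2 - lam * h1

lemma hexp_phi : ∀ θ : ℝ, Complex.exp ((phi lam θ : ℂ) * Complex.I)
    * (1 - lam * Complex.exp (θ * Complex.I)) = Complex.exp (θ * Complex.I) - lam := by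
  have hden := hden_ne lam hlam
  set s : ℝ → ℂ := fun θ => Complex.exp (-(phi lam θ : ℂ) * Complex.I) *
    ((Complex.exp (θ * Complex.I) - lam) / (1 - lam * Complex.exp (θ * Complex.I))) with hs_def
  have hE : ∀ θ : ℝ, HasDerivAt (fun t : ℝ => Complex.exp (t * Complex.I))
      (Complex.I * Complex.exp (θ * Complex.I)) θ := by
    intro θ
    have h1 : HasDerivAt (fun t : ℝ => (t : ℂ) * Complex.I) Complex.I θ := by
      simpa using ((hasDerivAt_id θ).ofReal_comp).mul_const Complex.I
    simpa [mul_comm] using h1.cexp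
  have hs : ∀ θ, HasDerivAt s 0 θ := by
    intro θ
    have hφθ := hphi_deriv lam hlam θ
    have hA : HasDerivAt (fun t : ℝ => Complex.exp (-(phi lam t : ℂ) * Complex.I))
        (-(ww lam θ : ℂ) * Complex.I * Complex.exp (-(phi lam θ : ℂ) * Complex.I)) θ := by
      have h1 : HasDerivAt (fun t : ℝ => -(phi lam t : ℂ) * Complex.I)
          (-(ww lam θ : ℂ) * Complex.I) θ := (hφθ.ofReal_comp.neg).mul_const Complex.I
      simpa [mul_comm] using h1.cexp
    have hnum : HasDerivAt (fun t : ℝ => Complex.exp (t * Complex.I) - (lam:ℂ))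
        (Complex.I * Complex.exp (θ * Complex.I)) θ := (hE θ).sub_const _
    have hden' : HasDerivAt (fun t : ℝ => (1:ℂ) - lam * Complex.exp (t * Complex.I))
        (-(lam * (Complex.I * Complex.exp (θ * Complex.I)))) θ :=
      ((hE θ).const_mul (lam:ℂ)).const_sub 1
    have hB := hnum.div hden' (hden θ)
    have hD := (hD_pos lam hlam θ).ne'
    have hDc : ((Dd lam θ : ℝ) : ℂ) ≠ 0 := Complex.ofReal_ne_zero.mpr hD
    have hwD : (ww lam θ : ℂ) * (Dd lam θ : ℂ) = 1 - (lam:ℂ)^2 := by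
      rw [← Complex.ofReal_mul]
      have : ww lam θ * Dd lam θ = 1 - lam^2 := by
        rw [ww, div_mul_cancel₀ _ hD]
      rw [this]
      push_cast
      ring
    have hk := hkey lam hlam θ
    have hval : (Complex.I * Complex.exp (θ * Complex.I) *
          (1 - lam * Complex.exp (θ * Complex.I)) -
          (Complex.exp (θ * Complex.I) - lam) *
            -(lam * (Complex.I * Complex.exp (θ * Complex.I)))) /
          (1 - lam * Complex.exp (θ * Complex.I)) ^ 2
        = Complex.I * (ww lam θ : ℂ) *
          ((Complex.exp (θ * Complex.I) - lam) / (1 - lam * Complex.exp (θ * Complex.I))) := by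
      have hnum_eq : Complex.I * Complex.exp (θ * Complex.I) *
          (1 - lam * Complex.exp (θ * Complex.I)) -
          (Complex.exp (θ * Complex.I) - lam) *
            -(lam * (Complex.I * Complex.exp (θ * Complex.I)))
          = Complex.I * (ww lam θ : ℂ) * (Complex.exp (θ * Complex.I) - lam) *
            (1 - lam * Complex.exp (θ * Complex.I)) := by
        calc Complex.I * Complex.exp (θ * Complex.I) *
            (1 - lam * Complex.exp (θ * Complex.I)) -
            (Complex.exp (θ * Complex.I) - lam) *
              -(lam * (Complex.I * Complex.exp (θ * Complex.I)))
            = Complex.I * Complex.exp (θ * Complex.I) * (1 - (lam:ℂ)^2) := by ring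
          _ = Complex.I * ((ww lam θ : ℂ) * (Dd lam θ : ℂ)) * Complex.exp (θ * Complex.I) := by
              rw [hwD]; ring
          _ = Complex.I * (ww lam θ : ℂ) * ((Dd lam θ : ℂ) * Complex.exp (θ * Complex.I)) := by
              ring
          _ = Complex.I * (ww lam θ : ℂ) * ((Complex.exp (θ * Complex.I) - lam) *
              (1 - lam * Complex.exp (θ * Complex.I))) := by rw [hk]
          _ = _ := by ring
      rw [← mul_div_assoc, div_eq_div_iff (pow_ne_zero 2 (hden θ)) (hden θ), hnum_eq]
      ring
    rw [hval] at hB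
    have hprod := hA.mul hB
    refine hprod.congr_deriv ?_
    simp only [Pi.div_apply]
    ring
  have hconst : ∀ θ : ℝ, s θ = s 0 := fun θ =>
    is_const_of_deriv_eq_zero (fun t => (hs t).differentiableAt)
      (fun t => (hs t).deriv) θ 0
  intro θ
  have hφ0 : phi lam 0 = 0 := intervalIntegral.integral_same
  have h0 : s 0 = 1 := by
    rw [hs_def]
    simp only [hφ0, Complex.ofReal_zero, neg_zero, zero_mul, Complex.exp_zero, one_mul,
      mul_one]
    rw [div_self]
    simpa using hden 0
  have hθ' := (hconst θ).trans h0
  rw [hs_def] at hθ'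
  simp only at hθ'
  have hee : Complex.exp ((phi lam θ : ℂ) * Complex.I) *
      Complex.exp (-(phi lam θ : ℂ) * Complex.I) = 1 := by
    rw [← Complex.exp_add]
    norm_num
  have h1 : (Complex.exp (θ * Complex.I) - lam) / (1 - lam * Complex.exp (θ * Complex.I))
      = Complex.exp ((phi lam θ : ℂ) * Complex.I) := by
    have h2 := congrArg (fun z => Complex.exp ((phi lam θ : ℂ) * Complex.I) * z) hθ'
    rw [← mul_assoc, hee, one_mul, mul_one] at h2
    exact h2
  rw [← h1, div_mul_cancel₀ _ (hden θ)]

end Phase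

lemma ww_even (lam : ℝ) : ∀ θ : ℝ, ww lam (-θ) = ww lam θ := by
  intro θ
  unfold ww Dd
  rw [Real.cos_neg]

lemma phi_odd (lam : ℝ) : ∀ θ : ℝ, phi lam (-θ) = -phi lam θ := by
  intro θ
  have h1 : ∫ x in (0:ℝ)..θ, ww lam (-x) = ∫ x in (-θ)..(0:ℝ), ww lam x := by
    simpa using intervalIntegral.integral_comp_neg (a := (0:ℝ)) (b := θ) (ww lam)
  have h2 : ∫ x in (0:ℝ)..θ, ww lam (-x) = phi lam θ := by
    unfold phi
    apply intervalIntegral.integral_congr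
    intro x _
    exact ww_even lam x
  unfold phi
  rw [intervalIntegral.integral_symm]
  rw [← h1, h2]
  rfl


lemma exp_orth (j k : ℕ) :
    ∫ θ in (-π)..π, Complex.exp (((j:ℂ) - k) * θ * Complex.I)
      = if j = k then (2*π : ℂ) else 0 := by
  by_cases hjk : j = k
  · subst hjk
    simp only [sub_self, zero_mul, Complex.exp_zero, if_true]
    rw [intervalIntegral.integral_const]
    rw [sub_neg_eq_add, Complex.real_smul]
    push_cast
    ring
  · rw [if_neg hjk]
    have hm : ((j:ℂ) - k) ≠ 0 := by
      rw [sub_ne_zero]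
      exact_mod_cast hjk
    have hc : ((j:ℂ) - k) * Complex.I ≠ 0 := mul_ne_zero hm Complex.I_ne_zero
    have heq : ∀ θ : ℝ, Complex.exp (((j:ℂ) - k) * θ * Complex.I)
        = Complex.exp ((((j:ℂ) - k) * Complex.I) * θ) := by
      intro θ; ring_nf
    rw [intervalIntegral.integral_congr (fun θ _ => heq θ)]
    rw [integral_exp_mul_complex hc]
    have hcast : ((-π : ℝ) : ℂ) = -(π:ℂ) := by push_cast; ring
    rw [hcast]
    have hm2 : Complex.exp ((((j:ℂ) - k) * Complex.I) * π)
        = Complex.exp ((((j:ℂ) - k) * Complex.I) * (-(π:ℂ))) := by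
      have hz : ∃ m : ℤ, ((j:ℂ) - k) = m := ⟨(j:ℤ) - k, by push_cast; ring⟩
      obtain ⟨m, hmz⟩ := hz
      rw [hmz]
      have h1 : ((m:ℂ) * Complex.I) * π = ((m:ℂ) * Complex.I) * (-(π:ℂ)) + m * (2*π*Complex.I) := by
        ring
      rw [h1, Complex.exp_add, Complex.exp_int_mul_two_pi_mul_I, mul_one]
    rw [hm2, sub_self, zero_div]

lemma coeff_s (F : ℂ → ℂ) (a : ℕ → ℂ) (k : ℕ)
    (hsum : ∀ z : ℂ, ‖z‖ < 1 → Summable (fun j => a j * z^j))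
    (htsum : ∀ z : ℂ, ‖z‖ < 1 → ∑' j, a j * z^j = F z)
    (s : ℝ) (hs0 : 0 < s) (hs1 : s < 1) :
    a k * (s:ℂ)^k = ((2*π : ℝ) : ℂ)⁻¹ *
      ∫ θ in (-π)..π, F ((s:ℂ) * Complex.exp ((θ:ℂ) * Complex.I)) *
        Complex.exp (((-(k * θ) : ℝ) : ℂ) * Complex.I) := by
  have hπ := Real.pi_pos
  set r := (1+s)/2 with hr_def
  have hsr : s < r := by rw [hr_def]; linarith
  have hr1 : r < 1 := by rw [hr_def]; linarith
  have hr0 : 0 < r := by rw [hr_def]; linarith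
  have hsum_r := hsum (r:ℂ) (by rw [Complex.norm_real, Real.norm_eq_abs, _root_.abs_of_pos hr0]; exact hr1)
  have h0 : Filter.Tendsto (fun j => ‖a j * (r:ℂ)^j‖) Filter.atTop (nhds 0) := by
    have := hsum_r.tendsto_atTop_zero
    simpa using this.norm
  obtain ⟨M, hM⟩ : ∃ M, ∀ j, ‖a j * (r:ℂ)^j‖ ≤ M := by
    obtain ⟨M, hM⟩ := h0.bddAbove_range
    exact ⟨M, fun j => hM (Set.mem_range_self j)⟩
  have hnorm_aj : ∀ j, ‖a j * (r:ℂ)^j‖ = ‖a j‖ * r^j := by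
    intro j
    rw [norm_mul, norm_pow, Complex.norm_real, Real.norm_eq_abs, _root_.abs_of_pos hr0]
  have hM0 : 0 ≤ M := le_trans (norm_nonneg _) (hM 0)
  have hsum_norm : Summable (fun j => ‖a j‖ * s^j) := by
    have hgeo : Summable (fun j : ℕ => M * (s/r)^j) := by
      apply Summable.mul_left
      apply summable_geometric_of_lt_one (by positivity)
      rw [div_lt_one hr0]; exact hsr
    apply Summable.of_nonneg_of_le (fun j => by positivity) (fun j => ?_) hgeo
    have hcancel : (s/r)^j * r^j = s^j := by
      rw [div_pow, div_mul_cancel₀ _ (pow_ne_zero j hr0.ne')]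
    calc ‖a j‖ * s^j = (‖a j‖ * r^j) * (s/r)^j := by rw [← hcancel]; ring
      _ ≤ M * (s/r)^j := by
          apply mul_le_mul_of_nonneg_right _ (by positivity)
          rw [← hnorm_aj]
          exact hM j
  -- the functions
  set f : ℕ → ℝ → ℂ := fun j θ => a j * ((s:ℂ) * Complex.exp ((θ:ℂ) * Complex.I))^j *
    Complex.exp (((-(k * θ) : ℝ) : ℂ) * Complex.I) with hf_def
  have hz_norm : ∀ θ : ℝ, ‖(s:ℂ) * Complex.exp ((θ:ℂ) * Complex.I)‖ = s := by
    intro θ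
    rw [norm_mul, Complex.norm_exp_ofReal_mul_I, mul_one, Complex.norm_real,
      Real.norm_eq_abs, _root_.abs_of_pos hs0]
  have hf_norm : ∀ j θ, ‖f j θ‖ = ‖a j‖ * s^j := by
    intro j θ
    rw [hf_def]
    simp only []
    rw [norm_mul, norm_mul, norm_pow, hz_norm, Complex.norm_exp_ofReal_mul_I, mul_one]
  have hf_cont : ∀ j, Continuous (f j) := by
    intro j
    apply Continuous.mul
    apply Continuous.mul continuous_const
    · apply Continuous.pow
      fun_prop
    · fun_prop
  -- interchange
  have hint : ∀ j, Integrable (f j) (volume.restrict (Set.Ioc (-π) π)) :=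
    fun j => (hf_cont j).integrableOn_Ioc
  have hmeas : (volume (Set.Ioc (-π) π)).toReal = 2*π := by
    rw [Real.volume_Ioc, ENNReal.toReal_ofReal (by linarith)]
    ring
  have hf_norm_int : ∀ j, ∫ θ in Set.Ioc (-π) π, ‖f j θ‖ = (2*π) * (‖a j‖ * s^j) := by
    intro j
    simp only [hf_norm]
    rw [MeasureTheory.setIntegral_const, measureReal_def, hmeas, smul_eq_mul]
  have hsummable_int : Summable (fun j => ∫ θ in Set.Ioc (-π) π, ‖f j θ‖) := by
    simp only [hf_norm_int]
    exact hsum_norm.mul_left (2*π)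
  have hkey := MeasureTheory.integral_tsum_of_summable_integral_norm hint hsummable_int
  -- pointwise sum
  have hptsum : ∀ θ : ℝ, ∑' j, f j θ
      = F ((s:ℂ) * Complex.exp ((θ:ℂ) * Complex.I)) *
        Complex.exp (((-(k * θ) : ℝ) : ℂ) * Complex.I) := by
    intro θ
    have hz : ‖(s:ℂ) * Complex.exp ((θ:ℂ) * Complex.I)‖ < 1 := by rw [hz_norm]; exact hs1
    rw [hf_def]
    simp only []
    rw [tsum_mul_right, htsum _ hz]
  -- each integral
  have heach : ∀ j, ∫ θ in Set.Ioc (-π) π, f j θ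
      = a j * (s:ℂ)^j * (if j = k then (2*π:ℂ) else 0) := by
    intro j
    have hfj : ∀ θ : ℝ, f j θ = a j * (s:ℂ)^j * Complex.exp (((j:ℂ) - k) * θ * Complex.I) := by
      intro θ
      rw [hf_def]
      simp only []
      rw [mul_pow, ← Complex.exp_nat_mul]
      have harg : Complex.exp ((j:ℂ) * ((θ:ℂ) * Complex.I)) *
          Complex.exp (((-(k * θ):ℝ):ℂ) * Complex.I)
          = Complex.exp (((j:ℂ) - k) * θ * Complex.I) := by
        rw [← Complex.exp_add]
        congr 1
        push_cast
        ring
      rw [← harg]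
      ring
    rw [← intervalIntegral.integral_of_le (by linarith : -π ≤ π)]
    rw [intervalIntegral.integral_congr (fun θ _ => hfj θ)]
    rw [intervalIntegral.integral_const_mul, exp_orth j k]
  -- sum over j
  have hlhs : ∑' j, ∫ θ in Set.Ioc (-π) π, f j θ = a k * (s:ℂ)^k * (2*π:ℂ) := by
    simp only [heach]
    rw [tsum_eq_single k]
    · rw [if_pos rfl]
    · intro j hj
      rw [if_neg hj, mul_zero]
  have h2π : ((2*π:ℝ):ℂ) ≠ 0 := by
    simp only [ne_eq, Complex.ofReal_eq_zero]
    positivity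
  rw [hlhs] at hkey
  have hFint : (∫ θ in (-π)..π, F ((s:ℂ) * Complex.exp ((θ:ℂ) * Complex.I)) *
      Complex.exp (((-(k * θ) : ℝ) : ℂ) * Complex.I))
      = a k * (s:ℂ)^k * (2*π:ℂ) := by
    rw [intervalIntegral.integral_of_le (by linarith : -π ≤ π)]
    simp only [← hptsum]
    exact hkey.symm
  rw [hFint]
  have hcast2 : ((2*π:ℝ):ℂ) = (2*π:ℂ) := by push_cast; ring
  have h2π' : (2*(π:ℂ)) ≠ 0 := by
    rw [← hcast2]
    exact Complex.ofReal_ne_zero.mpr (by positivity)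
  rw [hcast2, mul_comm (a k * (s:ℂ)^k) (2*(π:ℂ)), ← mul_assoc, inv_mul_cancel₀ h2π', one_mul]

lemma hden3 (lam : ℝ) (hlam : lam ∈ Set.Ioo (0:ℝ) 1) :
    ∀ z : ℂ, ‖z‖ ≤ 1 → (1:ℂ) - lam * z ≠ 0 := by
  intro z hz heq
  rw [sub_eq_zero] at heq
  have h1 : ‖(1:ℂ)‖ = ‖(lam:ℂ) * z‖ := by rw [heq]
  rw [norm_one, norm_mul, Complex.norm_real, Real.norm_eq_abs, _root_.abs_of_pos hlam.1] at h1
  nlinarith [hlam.1, hlam.2, norm_nonneg z]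

lemma bl_norm_le (lam : ℝ) (hlam : lam ∈ Set.Ioo (0:ℝ) 1) :
    ∀ z : ℂ, ‖z‖ ≤ 1 → ‖(z - lam)/(1 - lam * z)‖ ≤ 1 := by
  intro z hz
  have hd := hden3 lam hlam z hz
  rw [norm_div, div_le_one (norm_pos_iff.2 hd)]
  have hsq : Complex.normSq (z - lam) ≤ Complex.normSq (1 - lam * z) := by
    simp only [Complex.normSq_apply, Complex.sub_re, Complex.sub_im, Complex.mul_re,
      Complex.mul_im, Complex.ofReal_re, Complex.ofReal_im, Complex.one_re, Complex.one_im]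
    have hz2 : z.re^2 + z.im^2 ≤ 1 := by
      have h3 : Complex.normSq z = ‖z‖^2 := by
        rw [Complex.sq_norm]
      have h4 : Complex.normSq z ≤ 1 := by
        rw [h3]; nlinarith [norm_nonneg z]
      rw [Complex.normSq_apply] at h4
      nlinarith
    obtain ⟨h5, h6⟩ := hlam
    nlinarith [mul_nonneg (by nlinarith : (0:ℝ) ≤ 1 - lam^2)
      (by nlinarith : (0:ℝ) ≤ 1 - z.re^2 - z.im^2)]
  rw [Complex.norm_def, Complex.norm_def]
  exact Real.sqrt_le_sqrt hsq

lemma F_norm_le (lam : ℝ) (hlam : lam ∈ Set.Ioo (0:ℝ) 1) (n : ℕ) :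
    ∀ z : ℂ, ‖z‖ ≤ 1 →
      ‖(1 - z^2) * ((z - lam)/(1 - lam * z))^n‖ ≤ 2 := by
  intro z hz
  rw [norm_mul, norm_pow]
  have h1 : ‖(1:ℂ) - z^2‖ ≤ 2 := by
    calc ‖(1:ℂ) - z^2‖ ≤ ‖(1:ℂ)‖ + ‖z^2‖ := norm_sub_le _ _
      _ = 1 + ‖z‖^2 := by rw [norm_one, norm_pow]
      _ ≤ 2 := by nlinarith [norm_nonneg z]
  have h2 : ‖(z - lam)/(1 - lam * z)‖^n ≤ 1 :=
    pow_le_one₀ (norm_nonneg _) (bl_norm_le lam hlam z hz)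
  calc ‖(1:ℂ) - z^2‖ * ‖(z - lam)/(1 - lam * z)‖^n ≤ 2 * 1 :=
      mul_le_mul h1 h2 (by positivity) (by norm_num)
    _ = 2 := by ring

lemma coeff_boundary (lam : ℝ) (hlam : lam ∈ Set.Ioo (0:ℝ) 1) (n : ℕ) (a : ℕ → ℂ) (k : ℕ)
    (hsum : ∀ z : ℂ, ‖z‖ < 1 → Summable (fun j => a j * z^j))
    (htsum : ∀ z : ℂ, ‖z‖ < 1 → ∑' j, a j * z^j
      = (1 - z^2) * ((z - lam)/(1 - lam * z))^n) :
    a k = ((2*π : ℝ) : ℂ)⁻¹ *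
      ∫ θ in (-π)..π, ((1 - Complex.exp ((θ:ℂ) * Complex.I)^2) *
        ((Complex.exp ((θ:ℂ) * Complex.I) - lam)/(1 - lam * Complex.exp ((θ:ℂ) * Complex.I)))^n) *
        Complex.exp (((-(k * θ) : ℝ) : ℂ) * Complex.I) := by
  have hπ := Real.pi_pos
  set G : ℂ → ℂ := fun z => (1 - z^2) * ((z - lam)/(1 - lam * z))^n with hG_def
  set sm : ℕ → ℝ := fun m => 1 - 1/(m+2) with hsm_def
  have hsm0 : ∀ m, 0 < sm m := by
    intro m
    rw [hsm_def]
    simp only []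
    have h1 : 1/((m:ℝ)+2) ≤ 1/2 := by
      apply div_le_div_of_nonneg_left (by norm_num) (by norm_num) (by push_cast; linarith [Nat.cast_nonneg (α := ℝ) m])
    have h2 : 0 < 1/((m:ℝ)+2) := by positivity
    linarith
  have hsm1 : ∀ m, sm m < 1 := by
    intro m
    rw [hsm_def]
    simp only []
    have h2 : 0 < 1/((m:ℝ)+2) := by positivity
    linarith
  have hsmlim : Filter.Tendsto sm Filter.atTop (nhds 1) := by
    rw [hsm_def]
    have h1 : Filter.Tendsto (fun m : ℕ => 1/((m:ℝ)+2)) Filter.atTop (nhds 0) := by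
      apply Filter.Tendsto.div_atTop tendsto_const_nhds
      apply Filter.tendsto_atTop_add_const_right
      exact tendsto_natCast_atTop_atTop
    have := h1.const_sub 1
    simpa using this
  -- LHS limit
  have hlhs : Filter.Tendsto (fun m => a k * ((sm m : ℝ) : ℂ)^k) Filter.atTop (nhds (a k)) := by
    have h1 : Filter.Tendsto (fun m => ((sm m : ℝ) : ℂ)) Filter.atTop (nhds 1) := by
      have := (Complex.continuous_ofReal.tendsto 1).comp hsmlim
      simpa [Function.comp_def] using this
    have h2 := (h1.pow k).const_mul (a k)
    simpa using h2
  -- RHS limit via dominated convergence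
  have hrhs : Filter.Tendsto (fun m => ∫ θ in (-π)..π,
      G ((sm m : ℝ) * Complex.exp ((θ:ℂ) * Complex.I)) *
        Complex.exp (((-(k * θ) : ℝ) : ℂ) * Complex.I)) Filter.atTop
      (nhds (∫ θ in (-π)..π, G (Complex.exp ((θ:ℂ) * Complex.I)) *
        Complex.exp (((-(k * θ) : ℝ) : ℂ) * Complex.I))) := by
    apply intervalIntegral.tendsto_integral_filter_of_dominated_convergence (fun _ => 2)
    · apply Filter.Eventually.of_forall
      intro m
      apply Continuous.aestronglyMeasurable
      apply Continuous.mul _ (by fun_prop)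
      rw [hG_def]
      apply Continuous.mul (by fun_prop)
      apply Continuous.pow
      apply Continuous.div (by fun_prop) (by fun_prop)
      intro θ
      apply hden3 lam hlam
      rw [norm_mul, Complex.norm_exp_ofReal_mul_I, mul_one, Complex.norm_real,
        Real.norm_eq_abs, _root_.abs_of_pos (hsm0 m)]
      exact (hsm1 m).le
    · apply Filter.Eventually.of_forall
      intro m
      apply Filter.Eventually.of_forall
      intro θ _
      rw [norm_mul, Complex.norm_exp_ofReal_mul_I, mul_one]
      apply F_norm_le lam hlam
      rw [norm_mul, Complex.norm_exp_ofReal_mul_I, mul_one, Complex.norm_real,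
        Real.norm_eq_abs, _root_.abs_of_pos (hsm0 m)]
      exact (hsm1 m).le
    · exact intervalIntegrable_const
    · apply Filter.Eventually.of_forall
      intro θ _
      apply Filter.Tendsto.mul _ tendsto_const_nhds
      have hGc : ContinuousAt G (Complex.exp ((θ:ℂ) * Complex.I)) := by
        rw [hG_def]
        apply ContinuousAt.mul (by fun_prop)
        apply ContinuousAt.pow
        apply ContinuousAt.div (by fun_prop) (by fun_prop)
        apply hden3 lam hlam
        rw [Complex.norm_exp_ofReal_mul_I]
      have hzlim : Filter.Tendsto (fun m => ((sm m : ℝ) : ℂ) * Complex.exp ((θ:ℂ) * Complex.I))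
          Filter.atTop (nhds (Complex.exp ((θ:ℂ) * Complex.I))) := by
        have h1 : Filter.Tendsto (fun m => ((sm m : ℝ) : ℂ)) Filter.atTop (nhds 1) := by
          have := (Complex.continuous_ofReal.tendsto 1).comp hsmlim
          simpa [Function.comp_def] using this
        have := h1.mul_const (Complex.exp ((θ:ℂ) * Complex.I))
        simpa using this
      exact hGc.tendsto.comp hzlim
  -- identify the limits
  have heq : ∀ m, a k * ((sm m : ℝ) : ℂ)^k = ((2*π : ℝ) : ℂ)⁻¹ *
      ∫ θ in (-π)..π, G ((sm m : ℝ) * Complex.exp ((θ:ℂ) * Complex.I)) *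
        Complex.exp (((-(k * θ) : ℝ) : ℂ) * Complex.I) :=
    fun m => coeff_s G a k hsum htsum (sm m) (hsm0 m) (hsm1 m)
  have hfinal := (hrhs.const_mul (((2*π : ℝ) : ℂ)⁻¹))
  rw [Filter.tendsto_congr (fun m => (heq m).symm)] at hfinal
  exact tendsto_nhds_unique hlhs hfinal


/-- For λ ∈ (0,1) and Bⁿ(z) = ((z−λ)/(1−λz))ⁿ, there is K = K(λ) > 0 such
that every Taylor coefficient of (1 − z²)·Bⁿ at 0 is bounded in absolute value by K/√n.
The coefficients `c n k` are specified by the power-series representation on 𝔻. -/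
theorem linfA_norm_one_sub_zsq_blaschke_pow_le
    (lam : ℝ) (hlam : lam ∈ Set.Ioo (0 : ℝ) 1)
    (c : ℕ → ℕ → ℂ)
    (hc : ∀ n : ℕ, 1 ≤ n → ∀ z : ℂ, ‖z‖ < 1 →
      Summable (fun k : ℕ => c n k * z ^ k) ∧
      ∑' k : ℕ, c n k * z ^ k =
        (1 - z ^ 2) * ((z - (lam : ℂ)) / (1 - (lam : ℂ) * z)) ^ n) :
    ∃ K : ℝ, 0 < K ∧ ∀ n : ℕ, 1 ≤ n → ∀ k : ℕ, ‖c n k‖ ≤ K / Real.sqrt n := by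
  have hπ := Real.pi_pos
  have hl0 := hlam.1
  have hl1 := hlam.2
  set κ := 2*lam*(1-lam^2)/(1+lam)^4 with hκ_def
  have hκ : 0 < κ := by
    apply div_pos (by nlinarith) (by nlinarith)
  have hsκ : 0 < Real.sqrt κ := Real.sqrt_pos.2 hκ
  refine ⟨(2/π) * (8 + 2*π) / Real.sqrt κ, by positivity, ?_⟩
  intro n hn k
  have hn0 : (0:ℝ) < n := by exact_mod_cast hn
  have hsum : ∀ z : ℂ, ‖z‖ < 1 → Summable (fun j => c n j * z^j) := fun z hz => (hc n hn z hz).1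
  have htsum : ∀ z : ℂ, ‖z‖ < 1 → ∑' j, c n j * z^j
      = (1 - z^2) * ((z - lam)/(1 - lam*z))^n := fun z hz => (hc n hn z hz).2
  have hbd := coeff_boundary lam hlam n (c n) k hsum htsum
  -- phase functions
  set Ψ : ℝ → ℝ := fun θ => n * phi lam θ + (1 - (k:ℝ)) * θ with hΨ_def
  set Ψ' : ℝ → ℝ := fun θ => n * ww lam θ + (1 - (k:ℝ)) with hΨ'_def
  set Ψ'' : ℝ → ℝ := fun θ => n * ww' lam θ with hΨ''_def
  have hΨd : ∀ θ, HasDerivAt Ψ (Ψ' θ) θ := by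
    intro θ
    have h1 := (hphi_deriv lam hlam θ).const_mul (n:ℝ)
    have h2 : HasDerivAt (fun θ:ℝ => (1 - (k:ℝ)) * θ) (1 - (k:ℝ)) θ := by
      simpa using (hasDerivAt_id θ).const_mul (1 - (k:ℝ))
    simpa [hΨ_def, hΨ'_def, Pi.add_def] using h1.add h2
  have hΨ'd : ∀ θ, HasDerivAt Ψ' (Ψ'' θ) θ := by
    intro θ
    have h1 := (hw_deriv lam hlam θ).const_mul (n:ℝ)
    simpa [hΨ'_def, hΨ''_def] using h1.add_const (1 - (k:ℝ))
  have hΨ''c : Continuous Ψ'' := continuous_const.mul (hw'_cont lam hlam)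
  have hΨc : Continuous Ψ := continuous_iff_continuousAt.2 fun θ => (hΨd θ).continuousAt
  set ρ := (n:ℝ) * κ with hρ_def
  have hρ : 0 < ρ := mul_pos hn0 hκ
  have hlow : ∀ θ ∈ Set.Icc (0:ℝ) π, Ψ'' θ ≤ -ρ * Real.sin θ := by
    intro θ hθ
    have hs : 0 ≤ Real.sin θ := Real.sin_nonneg_of_nonneg_of_le_pi hθ.1 hθ.2
    have hD := hD_pos lam hlam θ
    have hD_le : Dd lam θ ≤ (1+lam)^2 := by
      unfold Dd
      nlinarith [Real.neg_one_le_cos θ]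
    have hDD : κ * (Dd lam θ)^2 ≤ 2*lam*(1-lam^2) := by
      have h2 : (Dd lam θ)^2 ≤ ((1+lam)^2)^2 := by nlinarith
      calc κ * (Dd lam θ)^2 ≤ κ * ((1+lam)^2)^2 := by nlinarith
        _ = 2*lam*(1-lam^2) := by
            rw [hκ_def]
            have h14 : ((1+lam)^2)^2 = (1+lam)^4 := by ring
            rw [h14, div_mul_cancel₀ _ (by positivity : ((1+lam)^4:ℝ) ≠ 0)]
    have key : κ * Real.sin θ ≤ ((1-lam^2) * (2*lam*Real.sin θ))/(Dd lam θ)^2 := by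
      rw [le_div_iff₀ (pow_pos hD 2)]
      calc κ * Real.sin θ * (Dd lam θ)^2 = (κ * (Dd lam θ)^2) * Real.sin θ := by ring
        _ ≤ (2*lam*(1-lam^2)) * Real.sin θ := mul_le_mul_of_nonneg_right hDD hs
        _ = (1-lam^2) * (2*lam*Real.sin θ) := by ring
    have key2 := mul_le_mul_of_nonneg_left key hn0.le
    rw [hΨ''_def]
    show (n:ℝ) * ww' lam θ ≤ -ρ * Real.sin θ
    unfold ww'
    rw [neg_div]
    rw [hρ_def]
    nlinarith [key2]
  -- oscillatory bound on [0,π]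
  have hS := osc_pi Ψ Ψ' Ψ'' hΨd hΨ'd hΨ''c ρ hρ hlow
  -- continuity of the integrand
  have hcont : Continuous fun θ:ℝ => (Real.sin θ:ℂ) * Complex.exp ((Ψ θ:ℂ) * Complex.I) := by
    apply Continuous.mul
    · exact Complex.continuous_ofReal.comp Real.continuous_sin
    · exact Complex.continuous_exp.comp ((Complex.continuous_ofReal.comp hΨc).mul
        continuous_const)
  -- pointwise identity
  have hpoint : ∀ θ : ℝ, ((1 - Complex.exp ((θ:ℂ) * Complex.I)^2) *
      ((Complex.exp ((θ:ℂ) * Complex.I) - lam)/(1 - lam * Complex.exp ((θ:ℂ) * Complex.I)))^n) *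
      Complex.exp (((-(k * θ) : ℝ) : ℂ) * Complex.I)
      = (-2*Complex.I) * ((Real.sin θ:ℂ) * Complex.exp ((Ψ θ:ℂ) * Complex.I)) := by
    intro θ
    have hfrac : (Complex.exp ((θ:ℂ) * Complex.I) - lam)/(1 - lam * Complex.exp ((θ:ℂ) * Complex.I))
        = Complex.exp ((phi lam θ : ℂ) * Complex.I) := by
      rw [div_eq_iff (hden_ne lam hlam θ)]
      exact (hexp_phi lam hlam θ).symm
    have hsin2 : (1:ℂ) - Complex.exp ((θ:ℂ) * Complex.I)^2
        = -2*Complex.I*(Real.sin θ:ℂ)*Complex.exp ((θ:ℂ) * Complex.I) := by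
      rw [Complex.exp_mul_I, Complex.ofReal_sin]
      have hp : Complex.sin (θ:ℂ)^2 + Complex.cos (θ:ℂ)^2 = 1 := Complex.sin_sq_add_cos_sq _
      have hI : Complex.I^2 = -1 := Complex.I_sq
      linear_combination (-1 : ℂ) * hp + (Complex.sin (θ:ℂ))^2 * hI
    have hcomb : Complex.exp ((θ:ℂ) * Complex.I) *
        Complex.exp ((n:ℂ)*((phi lam θ : ℂ) * Complex.I)) *
        Complex.exp (((-(k * θ) : ℝ) : ℂ) * Complex.I)
        = Complex.exp ((Ψ θ:ℂ) * Complex.I) := by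
      rw [← Complex.exp_add, ← Complex.exp_add]
      congr 1
      rw [hΨ_def]
      push_cast
      ring
    rw [hfrac, hsin2, ← Complex.exp_nat_mul, ← hcomb]
    ring
  have hbd2 : c n k = ((2*π:ℝ):ℂ)⁻¹ * ((-2*Complex.I) *
      ∫ θ in (-π)..π, (Real.sin θ:ℂ) * Complex.exp ((Ψ θ:ℂ) * Complex.I)) := by
    rw [hbd]
    congr 1
    rw [← intervalIntegral.integral_const_mul]
    apply intervalIntegral.integral_congr
    exact fun θ _ => hpoint θ
  -- symmetry
  have hodd : ∀ θ : ℝ, Ψ (-θ) = -Ψ θ := by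
    intro θ
    rw [hΨ_def]
    show (n:ℝ) * phi lam (-θ) + (1 - (k:ℝ)) * (-θ) = -((n:ℝ) * phi lam θ + (1 - (k:ℝ)) * θ)
    rw [phi_odd lam θ]
    ring
  have hsym : ‖∫ θ in (-π)..(0:ℝ), (Real.sin θ:ℂ) * Complex.exp ((Ψ θ:ℂ) * Complex.I)‖
      = ‖∫ θ in (0:ℝ)..π, (Real.sin θ:ℂ) * Complex.exp ((Ψ θ:ℂ) * Complex.I)‖ := by
    have h1 : ∫ θ in (-π)..(0:ℝ), (Real.sin θ:ℂ) * Complex.exp ((Ψ θ:ℂ) * Complex.I)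
        = ∫ θ in (0:ℝ)..π, (Real.sin (-θ):ℂ) * Complex.exp ((Ψ (-θ):ℂ) * Complex.I) := by
      have := intervalIntegral.integral_comp_neg (a := (0:ℝ)) (b := π)
        (fun θ => (Real.sin θ:ℂ) * Complex.exp ((Ψ θ:ℂ) * Complex.I))
      simpa using this.symm
    have h2 : ∀ θ : ℝ, (Real.sin (-θ):ℂ) * Complex.exp ((Ψ (-θ):ℂ) * Complex.I)
        = -((starRingEnd ℂ) ((Real.sin θ:ℂ) * Complex.exp ((Ψ θ:ℂ) * Complex.I))) := by
      intro θ
      rw [Real.sin_neg, hodd θ]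
      rw [map_mul, Complex.conj_ofReal, ← Complex.exp_conj, map_mul, Complex.conj_I,
        Complex.conj_ofReal]
      push_cast
      ring
    rw [h1, intervalIntegral.integral_congr (fun θ _ => h2 θ)]
    rw [intervalIntegral.integral_neg]
    rw [intervalIntegral.integral_of_le Real.pi_pos.le, integral_conj,
      ← intervalIntegral.integral_of_le Real.pi_pos.le]
    rw [norm_neg, RCLike.norm_conj]
  -- split
  have hsplit : ∫ θ in (-π)..π, (Real.sin θ:ℂ) * Complex.exp ((Ψ θ:ℂ) * Complex.I)
      = (∫ θ in (-π)..(0:ℝ), (Real.sin θ:ℂ) * Complex.exp ((Ψ θ:ℂ) * Complex.I))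
        + ∫ θ in (0:ℝ)..π, (Real.sin θ:ℂ) * Complex.exp ((Ψ θ:ℂ) * Complex.I) :=
    (intervalIntegral.integral_add_adjacent_intervals (hcont.intervalIntegrable _ _)
      (hcont.intervalIntegrable _ _)).symm
  -- final estimate
  have hT : ‖∫ θ in (-π)..π, (Real.sin θ:ℂ) * Complex.exp ((Ψ θ:ℂ) * Complex.I)‖
      ≤ 2 * ((8 + 2*π) / Real.sqrt ρ) := by
    rw [hsplit]
    calc ‖_ + _‖ ≤ ‖∫ θ in (-π)..(0:ℝ), (Real.sin θ:ℂ) * Complex.exp ((Ψ θ:ℂ) * Complex.I)‖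
          + ‖∫ θ in (0:ℝ)..π, (Real.sin θ:ℂ) * Complex.exp ((Ψ θ:ℂ) * Complex.I)‖ :=
        norm_add_le _ _
      _ ≤ (8 + 2*π) / Real.sqrt ρ + (8 + 2*π) / Real.sqrt ρ := by
          rw [hsym]
          exact add_le_add hS hS
      _ = 2 * ((8 + 2*π) / Real.sqrt ρ) := by ring
  have hnorm_c : ‖c n k‖ ≤ (2*π)⁻¹ * 2 * (2 * ((8 + 2*π) / Real.sqrt ρ)) := by
    rw [hbd2, norm_mul, norm_mul]
    have e1 : ‖((2*π:ℝ):ℂ)⁻¹‖ = (2*π)⁻¹ := by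
      rw [norm_inv, Complex.norm_real, Real.norm_eq_abs, _root_.abs_of_pos (by positivity)]
    have e2 : ‖(-2*Complex.I : ℂ)‖ = 2 := by
      rw [norm_mul, Complex.norm_I, mul_one]
      simp
    rw [e1, e2, mul_assoc]
    apply mul_le_mul_of_nonneg_left _ (by positivity)
    apply mul_le_mul_of_nonneg_left hT (by norm_num)
  have hsqrt : Real.sqrt ρ = Real.sqrt n * Real.sqrt κ := by
    rw [hρ_def, Real.sqrt_mul (Nat.cast_nonneg n)]
  have hsn : 0 < Real.sqrt n := Real.sqrt_pos.2 hn0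
  calc ‖c n k‖ ≤ (2*π)⁻¹ * 2 * (2 * ((8 + 2*π) / Real.sqrt ρ)) := hnorm_c
    _ = (2/π) * (8 + 2*π) / Real.sqrt κ / Real.sqrt n := by
        rw [hsqrt]
        field_simp
end

section
/- Let T be an n×n complex matrix that is power bounded by C with minimal polynomial m(z) = ∏_{i=1}^d (z−λ_i), and suppose |λ_i| = 1 for all i = 1,…,d. Then for every ζ ∈ ℂ that is not a root of m, the matrix ζI − T is invertible and ‖(ζI − T)⁻¹‖ ≤ C·√d / min_{1≤i≤d} |ζ − λ_i|. -/
open Polynomial Finset Filter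

/-- A power-bounded operator has no generalized eigenvector chain of length 2
at a unimodular eigenvalue. -/
lemma no_jordan_block
    {E : Type*} [NormedAddCommGroup E] [NormedSpace ℂ E]
    (T : E →L[ℂ] E) (C : ℝ) (hpb : ∀ j : ℕ, ‖T ^ j‖ ≤ C)
    (lam : ℂ) (hone : ‖lam‖ = 1) (v w : E)
    (hvw : T v = lam • v + w) (hw : T w = lam • w) : w = 0 := by
  have key : ∀ n : ℕ, (T ^ (n+1)) v = lam ^ (n+1) • v + (((n:ℂ)+1) * lam ^ n) • w := by
    intro n
    induction n with
    | zero => simp [hvw]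
    | succ n ih =>
      have h2 : T ^ (n+2) = T * T ^ (n+1) := by rw [pow_succ]; exact ((Commute.pow_self T (n+1)).symm.eq).symm
      rw [h2]
      have h3 : (T * T ^ (n+1)) v = T ((T ^ (n+1)) v) := rfl
      rw [h3, ih, map_add, map_smul, map_smul, hvw, hw]
      push_cast
      rw [smul_add, smul_smul, smul_smul]
      module
  by_contra hw0
  have hwpos : 0 < ‖w‖ := norm_pos_iff.mpr hw0
  obtain ⟨n, hn⟩ := exists_nat_gt ((C * ‖v‖ + ‖v‖) / ‖w‖)
  have h1 : ‖(T ^ (n+1)) v‖ ≤ C * ‖v‖ := by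
    calc ‖(T ^ (n+1)) v‖ ≤ ‖T ^ (n+1)‖ * ‖v‖ := (T ^ (n+1)).le_opNorm v
      _ ≤ C * ‖v‖ := mul_le_mul_of_nonneg_right (hpb (n+1)) (norm_nonneg v)
  have e1 : ‖(((n:ℂ)+1) * lam ^ n) • w‖ = ((n:ℝ)+1) * ‖w‖ := by
    rw [norm_smul, norm_mul, norm_pow, hone, one_pow, mul_one]
    congr 1
    have : ((n:ℂ)+1) = ((n+1 : ℕ) : ℂ) := by push_cast; ring
    rw [this, Complex.norm_natCast]; push_cast; ring
  have e2 : ‖lam ^ (n+1) • v‖ = ‖v‖ := by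
    rw [norm_smul, norm_pow, hone, one_pow, one_mul]
  have h2 : ((n:ℝ)+1) * ‖w‖ - ‖v‖ ≤ ‖(T ^ (n+1)) v‖ := by
    rw [key n]
    calc ((n:ℝ)+1) * ‖w‖ - ‖v‖
        = ‖(((n:ℂ)+1) * lam ^ n) • w‖ - ‖lam ^ (n+1) • v‖ := by rw [e1, e2]
      _ ≤ ‖lam ^ (n+1) • v + (((n:ℂ)+1) * lam ^ n) • w‖ := by
          have := norm_sub_norm_le ((((n:ℂ)+1) * lam ^ n) • w)
            (-(lam ^ (n+1) • v))
          simp only [norm_neg] at this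
          calc ‖(((n:ℂ)+1) * lam ^ n) • w‖ - ‖lam ^ (n+1) • v‖
              ≤ ‖(((n:ℂ)+1) * lam ^ n) • w - -(lam ^ (n+1) • v)‖ := this
            _ = ‖lam ^ (n+1) • v + (((n:ℂ)+1) * lam ^ n) • w‖ := by
                rw [sub_neg_eq_add, add_comm]
  have hfin : ((n:ℝ)+1) * ‖w‖ ≤ C * ‖v‖ + ‖v‖ := by linarith
  rw [div_lt_iff₀ hwpos] at hn
  nlinarith [hwpos]

lemma lam_injective
    {E : Type*} [NormedAddCommGroup E] [NormedSpace ℂ E]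
    (T : E →L[ℂ] E) (Cb : ℝ) (hpb : ∀ j : ℕ, ‖T ^ j‖ ≤ Cb)
    {d : ℕ} (lam : Fin d → ℂ)
    (hmin : minpoly ℂ T = ∏ i : Fin d, (X - C (lam i)))
    (hone : ∀ i, ‖lam i‖ = 1) : Function.Injective lam := by
  intro i j hij
  by_contra hne
  have hj' : j ∈ (univ : Finset (Fin d)).erase i := by
    simp [Finset.mem_erase, Ne.symm hne]
  set q : ℂ[X] := ∏ k ∈ ((univ : Finset (Fin d)).erase i).erase j, (X - C (lam k)) with hq
  have hqmonic : q.Monic := monic_prod_of_monic _ _ fun k _ => monic_X_sub_C _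
  set p : ℂ[X] := (X - C (lam i)) * q with hp
  have hpmonic : p.Monic := (monic_X_sub_C _).mul hqmonic
  have hm : minpoly ℂ T = (X - C (lam i)) * p := by
    rw [hmin, ← Finset.mul_prod_erase _ _ (mem_univ i), ← Finset.mul_prod_erase _ _ hj',
      hp, hij]
  have haev : Polynomial.aeval T p ≠ 0 := by
    intro h0
    have hdeg := minpoly.degree_le_of_ne_zero ℂ T hpmonic.ne_zero h0
    rw [hm, degree_mul, degree_X_sub_C, degree_eq_natDegree hpmonic.ne_zero] at hdeg
    norm_cast at hdeg
    omega
  obtain ⟨u, hu⟩ : ∃ u : E, (Polynomial.aeval T p) u ≠ 0 := by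
    by_contra h
    push_neg at h
    exact haev (ContinuousLinearMap.ext h)
  set w : E := (Polynomial.aeval T p) u with hwdef
  set v : E := (Polynomial.aeval T q) u with hvdef
  have hXC : Polynomial.aeval T (X - C (lam i)) = T - lam i • 1 := by
    rw [map_sub, Polynomial.aeval_X, Polynomial.aeval_C, Algebra.algebraMap_eq_smul_one]
  have hvw : T v = lam i • v + w := by
    have : w = (Polynomial.aeval T (X - C (lam i)) * Polynomial.aeval T q) u := by
      rw [← map_mul, ← hp, hwdef]
    rw [hXC] at this
    have h2 : w = T v - lam i • v := by
      rw [this]; rfl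
    rw [h2]; abel
  have hw : T w = lam i • w := by
    have h0 : Polynomial.aeval T ((X - C (lam i)) * p) = 0 := by
      rw [← hm]; exact minpoly.aeval ℂ T
    have : (Polynomial.aeval T (X - C (lam i)) * Polynomial.aeval T p) u = 0 := by
      rw [← map_mul, h0]; rfl
    rw [hXC] at this
    have h2 : T w - lam i • w = 0 := this
    have := sub_eq_zero.mp h2
    linear_combination (norm := module) this
  exact hu (no_jordan_block T Cb hpb (lam i) (hone i) v w hvw hw)

lemma key_estimate
    {E : Type*} [NormedAddCommGroup E] [NormedSpace ℂ E]
    (T : E →L[ℂ] E) (Cb : ℝ) (hCb : 0 ≤ Cb) (hpb : ∀ j : ℕ, ‖T ^ j‖ ≤ Cb)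
    {d : ℕ} (lam : Fin d → ℂ) (hone : ∀ i, ‖lam i‖ = 1)
    (hinj : Function.Injective lam)
    (P : Fin d → (E →L[ℂ] E))
    (hTj : ∀ j : ℕ, T ^ j = ∑ i, lam i ^ j • P i)
    (c : Fin d → ℂ) :
    ‖∑ i, c i • P i‖ ≤ Cb * Real.sqrt (∑ i, ‖c i‖^2) := by
  classical
  have hl0 : ∀ i, lam i ≠ 0 := fun i h => by
    have := hone i; rw [h, norm_zero] at this; norm_num at this
  set μ : Fin d → Fin d → ℂ := fun i k => (lam i)⁻¹ * lam k with hμ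
  have hμdiag : ∀ i, μ i i = 1 := fun i => inv_mul_cancel₀ (hl0 i)
  have hμ1 : ∀ i k, i ≠ k → μ i k ≠ 1 := by
    intro i k hik h
    apply hik
    apply hinj
    field_simp [hμ, hl0 i] at h
    have h' : (lam i)⁻¹ * lam k = 1 := h
    exact (inv_mul_eq_one₀ (hl0 i)).mp h'
  have hμn : ∀ i k, ‖μ i k‖ = 1 := by
    intro i k
    rw [hμ]; simp only [norm_mul, norm_inv, hone]; norm_num
  set e : Fin d → Fin d → ℝ := fun i k => 2 / ‖μ i k - 1‖ with he_def
  have he0 : ∀ i k, 0 ≤ e i k := fun i k => by positivity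
  have he : ∀ i k, i ≠ k → ∀ N : ℕ, ‖∑ j ∈ range N, (μ i k)^j‖ ≤ e i k := by
    intro i k hik N
    rw [geom_sum_eq (hμ1 i k hik)]
    rw [norm_div, he_def]
    have h1 : ‖μ i k ^ N - 1‖ ≤ 2 := by
      calc ‖μ i k ^ N - 1‖ ≤ ‖μ i k ^ N‖ + ‖(1:ℂ)‖ := norm_sub_le _ _
        _ = 2 := by rw [norm_pow, hμn, one_pow, norm_one]; norm_num
    have hpos : (0:ℝ) < ‖μ i k - 1‖ := norm_pos_iff.mpr (sub_ne_zero.mpr (hμ1 i k hik))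
    exact (div_le_div_iff_of_pos_right hpos).mpr h1
  set s : ℝ := ∑ i, ‖c i‖^2 with hs_def
  have hs0 : 0 ≤ s := Finset.sum_nonneg fun i _ => sq_nonneg _
  set B : ℝ := ∑ i, ∑ i' ∈ univ.erase i, ‖c i‖ * ‖c i'‖ * e i i' with hB_def
  have hB0 : 0 ≤ B := Finset.sum_nonneg fun i _ => Finset.sum_nonneg fun i' _ =>
    mul_nonneg (mul_nonneg (norm_nonneg _) (norm_nonneg _)) (he0 _ _)
  set K : ℝ := ∑ k, ∑ i ∈ univ.erase k, ‖c i‖ * e i k * ‖P k‖ with hK_def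
  have hK0 : 0 ≤ K := Finset.sum_nonneg fun k _ => Finset.sum_nonneg fun i _ =>
    mul_nonneg (mul_nonneg (norm_nonneg _) (he0 _ _)) (norm_nonneg _)
  have hconj : ∀ i : Fin d, (starRingEnd ℂ) (lam i) = (lam i)⁻¹ := by
    intro i
    have h1 : lam i * (starRingEnd ℂ) (lam i) = 1 := by
      rw [Complex.mul_conj, Complex.normSq_eq_norm_sq, hone i]
      norm_num
    exact eq_inv_of_mul_eq_one_left (by rw [mul_comm]; exact h1)
  -- the per-N estimate
  have hmain : ∀ N : ℕ, 0 < N →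
      ‖∑ i, c i • P i‖ ≤ Cb * Real.sqrt (s + B / N) + K / N := by
    intro N hN
    have hNR : (0:ℝ) < (N:ℝ) := by exact_mod_cast hN
    have hNC : ((N:ℂ)) ≠ 0 := by exact_mod_cast hN.ne'
    set g : ℕ → ℂ := fun j => ∑ i, c i * ((lam i)⁻¹)^j with hg_def
    have hgeo1 : ∀ k, ∑ j ∈ range N, (μ k k)^j = (N:ℂ) := by
      intro k; rw [hμdiag k]; simp
    -- the basic algebraic identity
    have hid : (N:ℂ)⁻¹ • (∑ j ∈ range N, g j • T ^ j)
        = ∑ k, ((N:ℂ)⁻¹ * ∑ i, c i * ∑ j ∈ range N, (μ i k)^j) • P k := by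
      have h1 : ∀ j, g j • T ^ j = ∑ k, (∑ i, c i * (μ i k)^j) • P k := by
        intro j
        rw [hTj j, Finset.smul_sum]
        refine Finset.sum_congr rfl fun k _ => ?_
        rw [smul_smul, hg_def, Finset.sum_mul]
        congr 1
        refine Finset.sum_congr rfl fun i _ => ?_
        rw [hμ, mul_pow]
        ring
      simp_rw [h1]
      rw [Finset.smul_sum]
      simp_rw [Finset.smul_sum, smul_smul]
      rw [Finset.sum_comm]
      refine Finset.sum_congr rfl fun k _ => ?_
      rw [← Finset.sum_smul]
      congr 1
      rw [← Finset.mul_sum]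
      congr 1
      rw [Finset.sum_comm]
      exact Finset.sum_congr rfl fun i _ => (Finset.mul_sum _ _ _).symm
    -- split off the diagonal
    have hsplit : ∑ k, ((N:ℂ)⁻¹ * ∑ i, c i * ∑ j ∈ range N, (μ i k)^j) • P k
        = (∑ k, c k • P k)
          + ∑ k, ((N:ℂ)⁻¹ * ∑ i ∈ univ.erase k, c i * ∑ j ∈ range N, (μ i k)^j) • P k := by
      rw [← Finset.sum_add_distrib]
      refine Finset.sum_congr rfl fun k _ => ?_
      rw [← add_smul]
      congr 1
      rw [← Finset.add_sum_erase _ _ (mem_univ k), hgeo1 k, mul_add]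
      congr 1
      field_simp
    have hA : (∑ i, c i • P i) = (N:ℂ)⁻¹ • (∑ j ∈ range N, g j • T ^ j)
        - ∑ k, ((N:ℂ)⁻¹ * ∑ i ∈ univ.erase k, c i * ∑ j ∈ range N, (μ i k)^j) • P k := by
      rw [hid, hsplit]; abel
    -- norm of the error term
    have hnorm2 : ‖∑ k, ((N:ℂ)⁻¹ * ∑ i ∈ univ.erase k, c i * ∑ j ∈ range N, (μ i k)^j) • P k‖
        ≤ K / N := by
      calc ‖∑ k, ((N:ℂ)⁻¹ * ∑ i ∈ univ.erase k, c i * ∑ j ∈ range N, (μ i k)^j) • P k‖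
          ≤ ∑ k, ‖((N:ℂ)⁻¹ * ∑ i ∈ univ.erase k, c i * ∑ j ∈ range N, (μ i k)^j) • P k‖ :=
            norm_sum_le _ _
        _ ≤ ∑ k, (∑ i ∈ univ.erase k, ‖c i‖ * e i k * ‖P k‖) / N := by
            refine Finset.sum_le_sum fun k _ => ?_
            rw [norm_smul ((N:ℂ)⁻¹ * ∑ i ∈ univ.erase k, c i * ∑ j ∈ range N, (μ i k)^j) (P k),
              norm_mul, norm_inv, Complex.norm_natCast]
            have hR : ‖∑ i ∈ univ.erase k, c i * ∑ j ∈ range N, (μ i k)^j‖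
                ≤ ∑ i ∈ univ.erase k, ‖c i‖ * e i k := by
              calc ‖∑ i ∈ univ.erase k, c i * ∑ j ∈ range N, (μ i k)^j‖
                  ≤ ∑ i ∈ univ.erase k, ‖c i * ∑ j ∈ range N, (μ i k)^j‖ := norm_sum_le _ _
                _ ≤ ∑ i ∈ univ.erase k, ‖c i‖ * e i k := by
                    refine Finset.sum_le_sum fun i hi => ?_
                    rw [norm_mul]
                    exact mul_le_mul_of_nonneg_left
                      (he i k (Finset.ne_of_mem_erase hi) N) (norm_nonneg _)
            calc (N:ℝ)⁻¹ * ‖∑ i ∈ univ.erase k, c i * ∑ j ∈ range N, (μ i k)^j‖ * ‖P k‖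
                ≤ (N:ℝ)⁻¹ * (∑ i ∈ univ.erase k, ‖c i‖ * e i k) * ‖P k‖ := by
                  have h2 := mul_le_mul_of_nonneg_left hR (by positivity : (0:ℝ) ≤ (N:ℝ)⁻¹)
                  exact mul_le_mul_of_nonneg_right h2 (norm_nonneg _)
              _ = (∑ i ∈ univ.erase k, ‖c i‖ * e i k * ‖P k‖) / N := by
                  rw [← Finset.sum_mul, div_eq_mul_inv]
                  ring
        _ = K / N := by rw [hK_def, Finset.sum_div]
    -- norm of the main term
    have hgsq : ∑ j ∈ range N, ‖g j‖^2 ≤ (N:ℝ) * s + B := by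
      have hconjg : ∀ j, (starRingEnd ℂ) (g j) = ∑ i, (starRingEnd ℂ) (c i) * (lam i)^j := by
        intro j
        rw [hg_def, map_sum]
        refine Finset.sum_congr rfl fun i _ => ?_
        rw [map_mul, map_pow, map_inv₀, hconj i, inv_inv]
      have h3 : ∀ j, g j * (starRingEnd ℂ) (g j)
          = ∑ i, ∑ i', (c i * (starRingEnd ℂ) (c i')) * (μ i i')^j := by
        intro j
        rw [hg_def, hconjg j, Finset.sum_mul_sum]
        refine Finset.sum_congr rfl fun i _ => Finset.sum_congr rfl fun i' _ => ?_
        rw [hμ, mul_pow]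
        ring
      have hexp : ∑ j ∈ range N, g j * (starRingEnd ℂ) (g j)
          = (∑ i, (c i * (starRingEnd ℂ) (c i)) * (N:ℂ))
            + ∑ i, ∑ i' ∈ univ.erase i,
                (c i * (starRingEnd ℂ) (c i')) * ∑ j ∈ range N, (μ i i')^j := by
        simp_rw [h3]
        rw [Finset.sum_comm, ← Finset.sum_add_distrib]
        refine Finset.sum_congr rfl fun i _ => ?_
        rw [Finset.sum_comm, ← Finset.add_sum_erase _ _ (mem_univ i)]
        congr 1
        · rw [← Finset.mul_sum, hgeo1 i]
        · exact Finset.sum_congr rfl fun i' _ => (Finset.mul_sum _ _ _).symm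
      have hre : (∑ j ∈ range N, ‖g j‖^2 : ℝ) = (∑ j ∈ range N, g j * (starRingEnd ℂ) (g j)).re := by
        rw [Complex.re_sum]
        refine Finset.sum_congr rfl fun j _ => ?_
        rw [Complex.mul_conj, Complex.ofReal_re, ← Complex.sq_norm]
      have hd1 : (∑ i, (c i * (starRingEnd ℂ) (c i)) * (N:ℂ)).re = s * N := by
        have h4 : ∀ i : Fin d, c i * (starRingEnd ℂ) (c i) = ((‖c i‖:ℂ))^2 := by
          intro i
          rw [Complex.mul_conj]
          norm_cast
          rw [← Complex.sq_norm]
        have h5 : (∑ i, (c i * (starRingEnd ℂ) (c i)) * (N:ℂ)) = ((s * N : ℝ) : ℂ) := by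
          rw [hs_def]
          push_cast
          rw [Finset.sum_mul]
          exact Finset.sum_congr rfl fun i _ => by rw [h4 i]
        rw [h5, Complex.ofReal_re]
      have hd2 : (∑ i, ∑ i' ∈ univ.erase i,
          (c i * (starRingEnd ℂ) (c i')) * ∑ j ∈ range N, (μ i i')^j).re ≤ B := by
        calc (∑ i, ∑ i' ∈ univ.erase i,
              (c i * (starRingEnd ℂ) (c i')) * ∑ j ∈ range N, (μ i i')^j).re
            ≤ ‖∑ i, ∑ i' ∈ univ.erase i,
              (c i * (starRingEnd ℂ) (c i')) * ∑ j ∈ range N, (μ i i')^j‖ :=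
              Complex.re_le_norm _
          _ ≤ ∑ i, ‖∑ i' ∈ univ.erase i,
              (c i * (starRingEnd ℂ) (c i')) * ∑ j ∈ range N, (μ i i')^j‖ := norm_sum_le _ _
          _ ≤ B := by
              rw [hB_def]
              refine Finset.sum_le_sum fun i _ => ?_
              calc ‖∑ i' ∈ univ.erase i,
                    (c i * (starRingEnd ℂ) (c i')) * ∑ j ∈ range N, (μ i i')^j‖
                  ≤ ∑ i' ∈ univ.erase i,
                    ‖(c i * (starRingEnd ℂ) (c i')) * ∑ j ∈ range N, (μ i i')^j‖ :=
                    norm_sum_le _ _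
                _ ≤ ∑ i' ∈ univ.erase i, ‖c i‖ * ‖c i'‖ * e i i' := by
                    refine Finset.sum_le_sum fun i' hi' => ?_
                    rw [norm_mul, norm_mul, RCLike.norm_conj]
                    exact mul_le_mul_of_nonneg_left
                      (he i i' (fun h => (Finset.ne_of_mem_erase hi') h.symm) N)
                      (mul_nonneg (norm_nonneg _) (norm_nonneg _))
      rw [hre, hexp, Complex.add_re, hd1]
      nlinarith [hd2]
    have hCS : ∑ j ∈ range N, ‖g j‖ ≤ Real.sqrt ((N:ℝ) * ((N:ℝ) * s + B)) := by
      have h5 := sq_sum_le_card_mul_sum_sq (s := range N) (f := fun j => ‖g j‖)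
      rw [Finset.card_range] at h5
      have h6 : (∑ j ∈ range N, ‖g j‖)^2 ≤ (N:ℝ) * ((N:ℝ) * s + B) := by
        calc (∑ j ∈ range N, ‖g j‖)^2 ≤ (N:ℝ) * ∑ j ∈ range N, ‖g j‖^2 := h5
          _ ≤ (N:ℝ) * ((N:ℝ) * s + B) := by
              exact mul_le_mul_of_nonneg_left hgsq (le_of_lt hNR)
      calc ∑ j ∈ range N, ‖g j‖ = Real.sqrt ((∑ j ∈ range N, ‖g j‖)^2) :=
            (Real.sqrt_sq (Finset.sum_nonneg fun j _ => norm_nonneg _)).symm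
        _ ≤ Real.sqrt ((N:ℝ) * ((N:ℝ) * s + B)) := Real.sqrt_le_sqrt h6
    have hnorm1 : ‖(N:ℂ)⁻¹ • (∑ j ∈ range N, g j • T ^ j)‖ ≤ Cb * Real.sqrt (s + B / N) := by
      have h7 : ‖(N:ℂ)⁻¹ • (∑ j ∈ range N, g j • T ^ j)‖
          ≤ (N:ℝ)⁻¹ * ∑ j ∈ range N, ‖g j‖ * Cb := by
        rw [norm_smul ((N:ℂ)⁻¹) (∑ j ∈ range N, g j • T ^ j), norm_inv, Complex.norm_natCast]
        refine mul_le_mul_of_nonneg_left ?_ (by positivity)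
        calc ‖∑ j ∈ range N, g j • T ^ j‖ ≤ ∑ j ∈ range N, ‖g j • T ^ j‖ := norm_sum_le _ _
          _ ≤ ∑ j ∈ range N, ‖g j‖ * Cb := by
              refine Finset.sum_le_sum fun j _ => ?_
              rw [norm_smul (g j) (T ^ j)]
              exact mul_le_mul_of_nonneg_left (hpb j) (norm_nonneg _)
      have h8 : (N:ℝ)⁻¹ * Real.sqrt ((N:ℝ) * ((N:ℝ) * s + B)) = Real.sqrt (s + B / N) := by
        have h9 : (N:ℝ)⁻¹ = Real.sqrt (((N:ℝ)⁻¹)^2) := (Real.sqrt_sq (by positivity)).symm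
        rw [h9, ← Real.sqrt_mul (by positivity)]
        congr 1
        field_simp
      calc ‖(N:ℂ)⁻¹ • (∑ j ∈ range N, g j • T ^ j)‖
          ≤ (N:ℝ)⁻¹ * ∑ j ∈ range N, ‖g j‖ * Cb := h7
        _ = ((N:ℝ)⁻¹ * ∑ j ∈ range N, ‖g j‖) * Cb := by rw [← Finset.sum_mul]; ring
        _ ≤ ((N:ℝ)⁻¹ * Real.sqrt ((N:ℝ) * ((N:ℝ) * s + B))) * Cb := by
            refine mul_le_mul_of_nonneg_right ?_ hCb
            exact mul_le_mul_of_nonneg_left hCS (by positivity)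
        _ = Cb * Real.sqrt (s + B / N) := by rw [h8]; ring
    calc ‖∑ i, c i • P i‖
        = ‖(N:ℂ)⁻¹ • (∑ j ∈ range N, g j • T ^ j)
            - ∑ k, ((N:ℂ)⁻¹ * ∑ i ∈ univ.erase k, c i * ∑ j ∈ range N, (μ i k)^j) • P k‖ := by
          rw [← hA]
      _ ≤ ‖(N:ℂ)⁻¹ • (∑ j ∈ range N, g j • T ^ j)‖
          + ‖∑ k, ((N:ℂ)⁻¹ * ∑ i ∈ univ.erase k, c i * ∑ j ∈ range N, (μ i k)^j) • P k‖ :=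
          norm_sub_le _ _
      _ ≤ Cb * Real.sqrt (s + B / N) + K / N := add_le_add hnorm1 hnorm2
  -- pass to the limit
  have hlim : Filter.Tendsto (fun N : ℕ => Cb * Real.sqrt (s + B / N) + K / N)
      Filter.atTop (nhds (Cb * Real.sqrt (s + 0) + 0)) := by
    apply Filter.Tendsto.add
    · apply Filter.Tendsto.const_mul
      apply Filter.Tendsto.sqrt
      exact tendsto_const_nhds.add (tendsto_const_div_atTop_nhds_zero_nat B)
    · exact tendsto_const_div_atTop_nhds_zero_nat K
  have hfin : ‖∑ i, c i • P i‖ ≤ Cb * Real.sqrt (s + 0) + 0 := by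
    refine ge_of_tendsto hlim ?_
    filter_upwards [Filter.eventually_ge_atTop 1] with N hN1
    exact hmain N (by omega)
  rw [add_zero, add_zero] at hfin
  exact hfin
/-- If T is power bounded by C (with respect to the operator norm induced by an
arbitrary norm on an n-dimensional complex space), its minimal polynomial is
∏_{i=1}^d (z−λ_i) with all |λ_i| = 1, and ζ is not a root of it, then ζ·I − T is invertible
and ‖(ζI − T)⁻¹‖ ≤ C·√d / min_i |ζ − λ_i|. -/
theorem resolvent_bound_unimodular_spectrum
    {E : Type*} [NormedAddCommGroup E] [NormedSpace ℂ E] [FiniteDimensional ℂ E]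
    (n : ℕ) (hn : 1 ≤ n) (hdim : Module.finrank ℂ E = n)
    (T : E →L[ℂ] E) (C : ℝ) (hC : 1 ≤ C) (hpb : ∀ j : ℕ, ‖T ^ j‖ ≤ C)
    (d : ℕ) (hd : 0 < d) (lam : Fin d → ℂ)
    (hmin : minpoly ℂ T = ∏ i : Fin d, (Polynomial.X - Polynomial.C (lam i)))
    (hone : ∀ i, ‖lam i‖ = 1)
    (ζ : ℂ) (hζ : ∀ i, ζ ≠ lam i) :
    ∃ S : E →L[ℂ] E, (ζ • 1 - T) * S = 1 ∧ S * (ζ • 1 - T) = 1 ∧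
      ‖S‖ ≤ C * Real.sqrt d /
        Finset.inf' Finset.univ (Finset.univ_nonempty_iff.mpr ⟨⟨0, hd⟩⟩)
          (fun i => ‖ζ - lam i‖) := by
  classical
  have hinj : Function.Injective lam := lam_injective T C hpb lam hmin hone
  set ℓ : Fin d → ℂ[X] := fun i => Lagrange.basis Finset.univ lam i with hℓ
  set P : Fin d → (E →L[ℂ] E) := fun i => Polynomial.aeval T (ℓ i) with hP
  have hsum : ∑ i, P i = 1 := by
    have h1 : ∑ i, ℓ i = 1 :=
      Lagrange.sum_basis hinj.injOn ⟨⟨0, hd⟩, mem_univ _⟩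
    calc ∑ i, P i = Polynomial.aeval T (∑ i, ℓ i) := by rw [map_sum]
      _ = 1 := by rw [h1, map_one]
  have hXC : ∀ a : ℂ, Polynomial.aeval T (X - Polynomial.C a) = T - a • 1 := by
    intro a
    rw [map_sub, Polynomial.aeval_X, Polynomial.aeval_C, Algebra.algebraMap_eq_smul_one]
  have hTP : ∀ i, T * P i = lam i • P i := by
    intro i
    have hfac : (X - Polynomial.C (lam i)) * ℓ i
        = Polynomial.C (∏ k ∈ univ.erase i, (lam i - lam k)⁻¹) * minpoly ℂ T := by
      rw [hmin, hℓ]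
      simp only [Lagrange.basis, Lagrange.basisDivisor]
      rw [prod_mul_distrib, ← Finset.mul_prod_erase _ (fun k => X - Polynomial.C (lam k)) (mem_univ i),
        ← map_prod]
      ring
    have h0 : Polynomial.aeval T ((X - Polynomial.C (lam i)) * ℓ i) = 0 := by
      rw [hfac, map_mul, minpoly.aeval, mul_zero]
    rw [map_mul, hXC] at h0
    have h1 : (T - lam i • 1) * P i = 0 := h0
    rw [sub_mul, smul_mul_assoc, one_mul, sub_eq_zero] at h1
    exact h1
  have hcomm : ∀ i, P i * T = T * P i := by
    intro i
    calc P i * T = Polynomial.aeval T (ℓ i * X) := by rw [map_mul, Polynomial.aeval_X]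
      _ = Polynomial.aeval T (X * ℓ i) := by rw [mul_comm]
      _ = T * P i := by rw [map_mul, Polynomial.aeval_X]
  have hTj : ∀ j : ℕ, T ^ j = ∑ i, lam i ^ j • P i := by
    intro j
    induction j with
    | zero => simp [hsum]
    | succ j ih =>
      rw [pow_succ, ih, Finset.sum_mul]
      exact Finset.sum_congr rfl fun i _ => by
        rw [smul_mul_assoc, hcomm i, hTP i, smul_smul, ← pow_succ]
  have key : ∀ c : Fin d → ℂ, ‖∑ i, c i • P i‖ ≤ C * Real.sqrt (∑ i, ‖c i‖^2) :=
    fun c => key_estimate T C (by linarith) hpb lam hone hinj P hTj c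
  -- now the resolvent
  set S : E →L[ℂ] E := ∑ i, (ζ - lam i)⁻¹ • P i with hS
  have hζne : ∀ i, ζ - lam i ≠ 0 := fun i => sub_ne_zero.mpr (hζ i)
  have hterm : ∀ i, (ζ • 1 - T) * ((ζ - lam i)⁻¹ • P i) = P i := by
    intro i
    rw [mul_smul_comm, sub_mul, smul_mul_assoc, one_mul, hTP i, ← sub_smul, smul_smul,
      inv_mul_cancel₀ (hζne i), one_smul]
  have hleft : (ζ • 1 - T) * S = 1 := by
    rw [hS, Finset.mul_sum, Finset.sum_congr rfl (fun i _ => hterm i), hsum]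
  have hright : S * (ζ • 1 - T) = 1 := by
    have : ∀ i, ((ζ - lam i)⁻¹ • P i) * (ζ • 1 - T) = P i := by
      intro i
      rw [smul_mul_assoc, mul_sub, mul_smul_comm, mul_one, hcomm i, hTP i, smul_sub,
        smul_smul, smul_smul, ← sub_smul, ← mul_sub, inv_mul_cancel₀ (hζne i), one_smul]
    rw [hS, Finset.sum_mul, Finset.sum_congr rfl (fun i _ => this i), hsum]
  refine ⟨S, hleft, hright, ?_⟩
  set δ := Finset.inf' Finset.univ (Finset.univ_nonempty_iff.mpr ⟨⟨0, hd⟩⟩)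
      (fun i => ‖ζ - lam i‖) with hδ
  have hδpos : 0 < δ := by
    rw [hδ, Finset.lt_inf'_iff]
    exact fun i _ => norm_pos_iff.mpr (hζne i)
  have hδle : ∀ i, δ ≤ ‖ζ - lam i‖ := fun i => Finset.inf'_le _ (mem_univ i)
  have hsle : (∑ i, ‖(ζ - lam i)⁻¹‖^2) ≤ d * (δ⁻¹)^2 := by
    calc (∑ i, ‖(ζ - lam i)⁻¹‖^2) ≤ ∑ _i : Fin d, (δ⁻¹)^2 := by
          apply Finset.sum_le_sum
          intro i _
          rw [norm_inv]
          have h1 : ‖ζ - lam i‖⁻¹ ≤ δ⁻¹ := inv_anti₀ hδpos (hδle i)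
          have h2 : (0:ℝ) ≤ ‖ζ - lam i‖⁻¹ := by positivity
          exact pow_le_pow_left₀ h2 h1 2
      _ = d * (δ⁻¹)^2 := by rw [Finset.sum_const, card_univ, Fintype.card_fin, nsmul_eq_mul]
  have hkey := key (fun i => (ζ - lam i)⁻¹)
  have hsqrt : Real.sqrt (∑ i, ‖(ζ - lam i)⁻¹‖^2) ≤ Real.sqrt d * δ⁻¹ := by
    calc Real.sqrt (∑ i, ‖(ζ - lam i)⁻¹‖^2) ≤ Real.sqrt (d * (δ⁻¹)^2) :=
          Real.sqrt_le_sqrt hsle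
      _ = Real.sqrt d * δ⁻¹ := by
          rw [Real.sqrt_mul (by positivity), Real.sqrt_sq (by positivity)]
  calc ‖S‖ ≤ C * Real.sqrt (∑ i, ‖(ζ - lam i)⁻¹‖^2) := hkey
    _ ≤ C * (Real.sqrt d * δ⁻¹) := by
        apply mul_le_mul_of_nonneg_left hsqrt (by linarith)
    _ = C * Real.sqrt d / δ := by ring
end

section
/- Let T be an n×n complex matrix that is power bounded by C with minimal polynomial m(z) = ∏_{i=1}^d (z−λ_i) (roots listed with multiplicity, in any fixed order). Let ζ ∈ ℂ be such that ζ ≠ λ_j and 1 − conj(λ_j)ζ ≠ 0 for every j. Then for every ρ ∈ (0,1), the matrix ζI − T is invertible and ‖(ζI − T)⁻¹‖² ≤ (C²/(1−ρ²)) · ∑_{k=1}^{d} ρ^{−(2k−2)} · (1 − ρ²|λ_k|²)/|ζ − λ_k|² · ∏_{j=1}^{k−1} | ((1 − conj(λ_j)ζ)/(ζ − λ_j)) · ( 1 + (1−ρ²)·conj(λ_j)ζ/(1 − conj(λ_j)ζ) ) |². -/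
noncomputable section
open Finset PowerSeries Filter

namespace RSB

/-! ### Summable-norm power series and evaluation -/

def SN (f : PowerSeries ℂ) : Prop := Summable fun m => ‖(PowerSeries.coeff m) f‖

section eval

variable {A : Type*} [NormedRing A] [NormedAlgebra ℂ A] [CompleteSpace A]

/-- Evaluation of a power series at an element of a Banach algebra. -/
def pev (a : A) (f : PowerSeries ℂ) : A := ∑' m, (PowerSeries.coeff m) f • a ^ m

variable {a : A} {Cb : ℝ}

lemma summable_norm_coeff_smul (hb : ∀ m, ‖a ^ m‖ ≤ Cb) {f : PowerSeries ℂ} (hf : SN f) :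
    Summable fun m => ‖(PowerSeries.coeff m) f • a ^ m‖ := by
  refine Summable.of_nonneg_of_le (fun m => norm_nonneg _) (fun m => ?_) (hf.mul_right Cb)
  rw [norm_smul]
  exact mul_le_mul_of_nonneg_left (hb m) (norm_nonneg _)

lemma norm_coeff_smul (f : PowerSeries ℂ) (m : ℕ) :
    ‖(PowerSeries.coeff m) f • a ^ m‖ = ‖(PowerSeries.coeff m) f‖ * ‖a ^ m‖ :=
  norm_smul _ _

lemma pev_add (hb : ∀ m, ‖a ^ m‖ ≤ Cb) {f g : PowerSeries ℂ} (hf : SN f) (hg : SN g) :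
    pev a (f + g) = pev a f + pev a g := by
  unfold pev
  rw [← Summable.tsum_add ((summable_norm_coeff_smul hb hf).of_norm)
    ((summable_norm_coeff_smul hb hg).of_norm)]
  simp [add_smul]

lemma pev_mul (hb : ∀ m, ‖a ^ m‖ ≤ Cb) {f g : PowerSeries ℂ} (hf : SN f) (hg : SN g) :
    pev a (f * g) = pev a f * pev a g := by
  unfold pev
  rw [tsum_mul_tsum_eq_tsum_sum_antidiagonal_of_summable_norm
    (summable_norm_coeff_smul hb hf) (summable_norm_coeff_smul hb hg)]
  refine tsum_congr fun n => ?_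
  rw [PowerSeries.coeff_mul, Finset.sum_smul]
  refine Finset.sum_congr rfl fun p hp => ?_
  have hpn : p.1 + p.2 = n := Finset.HasAntidiagonal.mem_antidiagonal.mp hp
  rw [smul_mul_smul_comm, ← pow_add, hpn]

lemma pev_one : pev a (1 : PowerSeries ℂ) = 1 := by
  unfold pev
  rw [tsum_eq_single 0]
  · simp
  · intro m hm; simp [PowerSeries.coeff_one, hm]

lemma pev_C (c : ℂ) : pev a (PowerSeries.C c) = c • 1 := by
  unfold pev
  rw [tsum_eq_single 0]
  · simp
  · intro m hm; simp [PowerSeries.coeff_C, hm]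

lemma pev_X : pev a (PowerSeries.X : PowerSeries ℂ) = a := by
  unfold pev
  rw [tsum_eq_single 1]
  · simp
  · intro m hm; simp [PowerSeries.coeff_X, hm]

lemma pev_sub (hb : ∀ m, ‖a ^ m‖ ≤ Cb) {f g : PowerSeries ℂ} (hf : SN f) (hg : SN g) :
    pev a (f - g) = pev a f - pev a g := by
  unfold pev
  rw [← Summable.tsum_sub ((summable_norm_coeff_smul hb hf).of_norm)
    ((summable_norm_coeff_smul hb hg).of_norm)]
  simp [sub_smul]

lemma pev_coe_poly (p : Polynomial ℂ) : pev a (p : PowerSeries ℂ) = Polynomial.aeval a p := by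
  unfold pev
  rw [tsum_eq_sum (s := Finset.range (p.natDegree + 1)) ?_, Polynomial.aeval_eq_sum_range]
  · exact Finset.sum_congr rfl fun m _ => by rw [Polynomial.coeff_coe]
  · intro m hm
    rw [Polynomial.coeff_coe, Polynomial.coeff_eq_zero_of_natDegree_lt, zero_smul]
    simp at hm; omega

end eval

/-! ### SN closure lemmas -/

lemma SN_add {f g : PowerSeries ℂ} (hf : SN f) (hg : SN g) : SN (f + g) := by
  refine Summable.of_nonneg_of_le (fun m => norm_nonneg _) (fun m => ?_) (hf.add hg)
  rw [map_add]; exact norm_add_le _ _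

lemma SN_neg {f : PowerSeries ℂ} (hf : SN f) : SN (-f) := by
  unfold SN at *; simpa using hf

lemma SN_sub {f g : PowerSeries ℂ} (hf : SN f) (hg : SN g) : SN (f - g) := by
  rw [sub_eq_add_neg]; exact SN_add hf (SN_neg hg)

lemma SN_mul {f g : PowerSeries ℂ} (hf : SN f) (hg : SN g) : SN (f * g) := by
  have := summable_norm_sum_mul_antidiagonal_of_summable_norm hf hg
  unfold SN
  refine this.congr fun n => ?_
  rw [PowerSeries.coeff_mul]

lemma SN_C (c : ℂ) : SN (PowerSeries.C c) := by
  unfold SN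
  apply summable_of_ne_finset_zero (s := {0})
  intro m hm
  simp [PowerSeries.coeff_C, List.mem_singleton]
  intro h; simp [h] at hm

lemma SN_one : SN (1 : PowerSeries ℂ) := by
  have := SN_C 1; simpa using this

lemma SN_X : SN (PowerSeries.X : PowerSeries ℂ) := by
  unfold SN
  apply summable_of_ne_finset_zero (s := {1})
  intro m hm
  simp [PowerSeries.coeff_X]
  intro h; simp [h] at hm

lemma SN_coe_poly (p : Polynomial ℂ) : SN (p : PowerSeries ℂ) := by
  unfold SN
  apply summable_of_ne_finset_zero (s := Finset.range (p.natDegree + 1))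
  intro m hm
  rw [Polynomial.coeff_coe, norm_eq_zero]
  apply Polynomial.coeff_eq_zero_of_natDegree_lt
  simp at hm; omega

lemma SN_rescale {ρ : ℝ} (h0 : 0 ≤ ρ) (h1 : ρ ≤ 1) {f : PowerSeries ℂ} (hf : SN f) :
    SN (PowerSeries.rescale (ρ : ℂ) f) := by
  refine Summable.of_nonneg_of_le (fun m => norm_nonneg _) (fun m => ?_) hf
  rw [PowerSeries.coeff_rescale, norm_mul, norm_pow]
  have : ‖(ρ:ℂ)‖ ≤ 1 := by rw [Complex.norm_real, Real.norm_eq_abs, abs_of_nonneg h0]; exact h1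
  calc ‖(ρ:ℂ)‖ ^ m * ‖(PowerSeries.coeff m) f‖
      ≤ 1 * ‖(PowerSeries.coeff m) f‖ := by
        apply mul_le_mul_of_nonneg_right _ (norm_nonneg _)
        exact pow_le_one₀ (norm_nonneg _) this
    _ = _ := one_mul _

/-! ### The Szegő kernel and Blaschke numerator -/

def K (μ : ℂ) : PowerSeries ℂ := PowerSeries.mk fun m => (starRingEnd ℂ μ) ^ m

lemma coeff_K (μ : ℂ) (m : ℕ) : (PowerSeries.coeff m) (K μ) = (starRingEnd ℂ μ) ^ m :=
  PowerSeries.coeff_mk _ _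

lemma SN_K {μ : ℂ} (hμ : ‖μ‖ < 1) : SN (K μ) := by
  unfold SN
  refine Summable.congr (summable_geometric_of_lt_one (norm_nonneg μ) hμ) fun m => ?_
  rw [coeff_K, norm_pow, RCLike.norm_conj]

lemma K_inv (μ : ℂ) : (1 - PowerSeries.C (starRingEnd ℂ μ) * PowerSeries.X) * K μ = 1 := by
  ext n
  rw [sub_mul, one_mul, map_sub, mul_assoc, PowerSeries.coeff_C_mul]
  cases n with
  | zero => simp [coeff_K]
  | succ n =>
      rw [PowerSeries.coeff_succ_X_mul, coeff_K, coeff_K, PowerSeries.coeff_one]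
      ring_nf
      simp [pow_succ]

def Bl (μ : ℂ) : PowerSeries ℂ := (PowerSeries.X - PowerSeries.C μ) * K μ

lemma SN_Bl {μ : ℂ} (hμ : ‖μ‖ < 1) : SN (Bl μ) :=
  SN_mul (SN_sub SN_X (SN_C μ)) (SN_K hμ)

/-! ### squared-coefficient norm -/

def N2 (f : PowerSeries ℂ) : ℝ := ∑' m, ‖(PowerSeries.coeff m) f‖ ^ 2

lemma sq_summable {f : PowerSeries ℂ} (hf : SN f) :
    Summable fun m => ‖(PowerSeries.coeff m) f‖ ^ 2 := by
  have h1 : ∀ᶠ m in atTop, ‖(PowerSeries.coeff m) f‖ < 1 :=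
    hf.tendsto_atTop_zero.eventually_lt_const one_pos
  obtain ⟨N, hN⟩ := eventually_atTop.mp h1
  rw [← summable_nat_add_iff N]
  refine Summable.of_nonneg_of_le (fun m => sq_nonneg _) (fun m => ?_)
    ((summable_nat_add_iff N).2 hf)
  have h2 := hN (m + N) (by omega)
  have h3 : (0:ℝ) ≤ ‖(PowerSeries.coeff (m+N)) f‖ := norm_nonneg _
  nlinarith

lemma summable_mul_norm {u v : ℕ → ℂ} (hu : Summable fun m => ‖u m‖ ^ 2)
    (hv : Summable fun m => ‖v m‖ ^ 2) : Summable fun m => ‖u m‖ * ‖v m‖ := by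
  refine Summable.of_nonneg_of_le (fun m => by positivity) (fun m => ?_)
    ((hu.add hv).div_const 2)
  nlinarith [sq_nonneg (‖u m‖ - ‖v m‖)]

lemma norm_sub_sq_c (a b : ℂ) :
    ‖a - b‖ ^ 2 = ‖a‖ ^ 2 + ‖b‖ ^ 2 - 2 * (a * (starRingEnd ℂ) b).re := by
  simp only [Complex.sq_norm]
  exact Complex.normSq_sub a b

lemma norm_add_sq_c (a b : ℂ) :
    ‖a + b‖ ^ 2 = ‖a‖ ^ 2 + ‖b‖ ^ 2 + 2 * (a * (starRingEnd ℂ) b).re := by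
  simp only [Complex.sq_norm]
  exact Complex.normSq_add a b


/-! ### Isometry and Pythagoras -/

set_option maxHeartbeats 1000000 in
lemma N2_Bl_mul {μ : ℂ} (hμ : ‖μ‖ < 1) {f : PowerSeries ℂ} (hf : SN f) :
    N2 (Bl μ * f) = N2 f := by
  classical
  set u : ℕ → ℂ := fun m => (PowerSeries.coeff m) (K μ * f) with hu
  have hSNu : SN (K μ * f) := SN_mul (SN_K hμ) hf
  have hu2 : Summable fun m => ‖u m‖ ^ 2 := sq_summable hSNu
  have hu2' : Summable fun m => ‖u (m + 1)‖ ^ 2 := (summable_nat_add_iff 1).2 hu2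
  have hBf : Bl μ * f = (PowerSeries.X - PowerSeries.C μ) * (K μ * f) := by
    rw [Bl, mul_assoc]
  have hP0 : (PowerSeries.coeff 0) (Bl μ * f) = -(μ * u 0) := by
    rw [hBf, sub_mul, map_sub, PowerSeries.coeff_zero_X_mul, PowerSeries.coeff_C_mul]
    simp [hu]
  have hPs : ∀ n, (PowerSeries.coeff (n + 1)) (Bl μ * f) = u n - μ * u (n + 1) := by
    intro n
    rw [hBf, sub_mul, map_sub, PowerSeries.coeff_succ_X_mul, PowerSeries.coeff_C_mul]
  have hfu : f = (1 - PowerSeries.C (starRingEnd ℂ μ) * PowerSeries.X) * (K μ * f) := by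
    rw [← mul_assoc, K_inv, one_mul]
  have hf0 : (PowerSeries.coeff 0) f = u 0 := by
    conv_lhs => rw [hfu]
    rw [sub_mul, one_mul, map_sub, mul_assoc, PowerSeries.coeff_C_mul,
      PowerSeries.coeff_zero_X_mul]
    simp [hu]
  have hfs : ∀ n, (PowerSeries.coeff (n + 1)) f = u (n + 1) - (starRingEnd ℂ μ) * u n := by
    intro n
    conv_lhs => rw [hfu]
    rw [sub_mul, one_mul, map_sub, mul_assoc, PowerSeries.coeff_C_mul,
      PowerSeries.coeff_succ_X_mul]
  set A : ℝ := ∑' m, ‖u m‖ ^ 2 with hA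
  set A' : ℝ := ∑' m, ‖u (m + 1)‖ ^ 2 with hA'
  have hAA : A = ‖u 0‖ ^ 2 + A' := Summable.tsum_eq_zero_add hu2
  set c : ℕ → ℝ := fun n => (u n * (starRingEnd ℂ) (μ * u (n + 1))).re with hc
  have hv2 : Summable fun m => ‖μ * u (m + 1)‖ ^ 2 := by
    refine (hu2'.mul_left (‖μ‖ ^ 2)).congr fun m => ?_
    rw [norm_mul, mul_pow]
  have hcs : Summable c := by
    refine Summable.of_norm_bounded (summable_mul_norm hu2 hv2) fun n => ?_
    rw [Real.norm_eq_abs, hc]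
    calc |(u n * (starRingEnd ℂ) (μ * u (n + 1))).re|
        ≤ ‖u n * (starRingEnd ℂ) (μ * u (n + 1))‖ := Complex.abs_re_le_norm _
      _ = ‖u n‖ * ‖μ * u (n + 1)‖ := by
          rw [norm_mul, RCLike.norm_conj]
  have hL : N2 (Bl μ * f) = ‖μ‖ ^ 2 * ‖u 0‖ ^ 2 + (A + ‖μ‖ ^ 2 * A' - 2 * ∑' n, c n) := by
    rw [N2, Summable.tsum_eq_zero_add (sq_summable (SN_mul (SN_Bl hμ) hf)), hP0, norm_neg, norm_mul,
      mul_pow]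
    congr 1
    have h1 : ∀ n, ‖(PowerSeries.coeff (n + 1)) (Bl μ * f)‖ ^ 2
        = ‖u n‖ ^ 2 + ‖μ‖ ^ 2 * ‖u (n + 1)‖ ^ 2 - 2 * c n := by
      intro n
      rw [hPs n, norm_sub_sq_c, norm_mul, mul_pow, hc]
    rw [tsum_congr h1, Summable.tsum_sub (hu2.add (hv2.congr fun m => by rw [norm_mul, mul_pow]))
      (hcs.mul_left 2), Summable.tsum_add hu2 (hu2'.mul_left (‖μ‖ ^ 2)), tsum_mul_left, tsum_mul_left]
  have hR : N2 f = ‖u 0‖ ^ 2 + (A' + ‖μ‖ ^ 2 * A - 2 * ∑' n, c n) := by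
    rw [N2, Summable.tsum_eq_zero_add (sq_summable hf), hf0]
    congr 1
    have h1 : ∀ n, ‖(PowerSeries.coeff (n + 1)) f‖ ^ 2
        = ‖u (n + 1)‖ ^ 2 + ‖μ‖ ^ 2 * ‖u n‖ ^ 2 - 2 * c n := by
      intro n
      rw [hfs n, norm_sub_sq_c, norm_mul, RCLike.norm_conj, mul_pow]
      have h2 : (u (n + 1) * (starRingEnd ℂ) ((starRingEnd ℂ) μ * u n)).re = c n := by
        have h3 : u (n + 1) * (starRingEnd ℂ) ((starRingEnd ℂ) μ * u n)
            = (starRingEnd ℂ) (u n * (starRingEnd ℂ) (μ * u (n + 1))) := by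
          simp only [map_mul, Complex.conj_conj]
          ring
        rw [h3, Complex.conj_re]
      rw [h2]
    rw [tsum_congr h1, Summable.tsum_sub (hu2'.add ((hu2.mul_left (‖μ‖ ^ 2))))
      (hcs.mul_left 2), Summable.tsum_add hu2' (hu2.mul_left (‖μ‖ ^ 2)), tsum_mul_left, tsum_mul_left]
  rw [hL, hR, hAA]
  ring

lemma pev_Bl_mul_self {μ : ℂ} (hμ : ‖μ‖ < 1) {f : PowerSeries ℂ} (hf : SN f) :
    pev μ (Bl μ * f) = 0 := by
  have hb : ∀ m : ℕ, ‖μ ^ m‖ ≤ (1:ℝ) := fun m => by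
    rw [norm_pow]; exact pow_le_one₀ (norm_nonneg _) hμ.le
  rw [pev_mul hb (SN_Bl hμ) hf, Bl, pev_mul hb (SN_sub SN_X (SN_C μ)) (SN_K hμ),
    pev_sub hb SN_X (SN_C μ), pev_X, pev_C]
  simp [smul_eq_mul]

lemma N2_step {μ α : ℂ} (hμ : ‖μ‖ < 1) {f : PowerSeries ℂ} (hf : SN f) :
    N2 (PowerSeries.C α * K μ + Bl μ * f)
      = ‖α‖ ^ 2 * (1 - ‖μ‖ ^ 2)⁻¹ + N2 f := by
  have hW : SN (Bl μ * f) := SN_mul (SN_Bl hμ) hf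
  set W : ℕ → ℂ := fun n => (PowerSeries.coeff n) (Bl μ * f) with hWdef
  have hW2 : Summable fun n => ‖W n‖ ^ 2 := sq_summable hW
  have hμ2 : ‖μ‖ ^ 2 < 1 := by nlinarith [norm_nonneg μ]
  have hgeo : Summable fun n : ℕ => (‖μ‖ ^ 2) ^ n :=
    summable_geometric_of_lt_one (by positivity) hμ2
  have hco : ∀ n, (PowerSeries.coeff n) (PowerSeries.C α * K μ + Bl μ * f)
      = α * (starRingEnd ℂ μ) ^ n + W n := by
    intro n; rw [map_add, PowerSeries.coeff_C_mul, coeff_K]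
  have hcrossz : Summable fun n => α * (starRingEnd ℂ μ) ^ n * (starRingEnd ℂ) (W n) := by
    refine Summable.of_norm_bounded (hW.mul_left ‖α‖) fun n => ?_
    rw [norm_mul, norm_mul, RCLike.norm_conj, norm_pow, RCLike.norm_conj]
    have h1 : ‖μ‖ ^ n ≤ 1 := pow_le_one₀ (norm_nonneg _) hμ.le
    have h2 : (0:ℝ) ≤ ‖α‖ := norm_nonneg _
    have h3 : (0:ℝ) ≤ ‖W n‖ := norm_nonneg _
    have h4 : ‖W n‖ = ‖(PowerSeries.coeff n) (Bl μ * f)‖ := rfl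
    rw [← h4]
    nlinarith [mul_nonneg (mul_nonneg h2 h3) (sub_nonneg.mpr h1)]
  have hcross : Summable fun n => (α * (starRingEnd ℂ μ) ^ n * (starRingEnd ℂ) (W n)).re := by
    refine Summable.of_norm_bounded hcrossz.norm fun n => ?_
    rw [Real.norm_eq_abs]
    exact Complex.abs_re_le_norm _
  have hz : (∑' n, α * (starRingEnd ℂ μ) ^ n * (starRingEnd ℂ) (W n)) = 0 := by
    have h1 : ∀ n, α * (starRingEnd ℂ μ) ^ n * (starRingEnd ℂ) (W n)
        = α * (starRingEnd ℂ) (W n * μ ^ n) := by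
      intro n; simp only [map_mul, map_pow]; ring
    rw [tsum_congr h1, tsum_mul_left]
    have h2 : (∑' n, (starRingEnd ℂ) (W n * μ ^ n)) = (starRingEnd ℂ) (∑' n, W n * μ ^ n) :=
      (tsum_star).symm
    rw [h2]
    have h3 : (∑' n, W n * μ ^ n) = pev μ (Bl μ * f) := by
      rw [pev]; exact tsum_congr fun n => by rw [smul_eq_mul]
    rw [h3, pev_Bl_mul_self hμ hf]
    simp
  have hkey : ∀ n, ‖α * (starRingEnd ℂ μ) ^ n + W n‖ ^ 2
      = ‖α‖ ^ 2 * (‖μ‖ ^ 2) ^ n + ‖W n‖ ^ 2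
        + 2 * (α * (starRingEnd ℂ μ) ^ n * (starRingEnd ℂ) (W n)).re := by
    intro n
    rw [norm_add_sq_c, norm_mul, norm_pow, RCLike.norm_conj, mul_pow, ← pow_mul,
      mul_comm n 2, pow_mul]
  have hre : (∑' n, (α * (starRingEnd ℂ μ) ^ n * (starRingEnd ℂ) (W n)).re) = 0 := by
    have := (Complex.reCLM.map_tsum hcrossz).symm
    simp only [Complex.reCLM_apply] at this
    rw [this, hz]
    simp
  rw [N2, tsum_congr fun n => by rw [hco n, hkey n]]
  have hWN : (∑' n, ‖W n‖ ^ 2) = N2 f := N2_Bl_mul hμ hf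
  rw [Summable.tsum_add ((hgeo.mul_left _).add hW2) (hcross.mul_left 2),
    Summable.tsum_add (hgeo.mul_left _) hW2, tsum_mul_left, tsum_mul_left, hre,
    tsum_geometric_of_lt_one (by positivity) hμ2, hWN]
  ring


/-! ### The interpolation recursion -/

lemma SN_zero : SN (0 : PowerSeries ℂ) := by
  unfold SN; simp [summable_zero]

def hseq (w : ℂ) : List ℂ → ℂ → PowerSeries ℂ
  | [], _ => 0
  | μ :: L, c =>
      PowerSeries.C (c * (1 - starRingEnd ℂ μ * μ) / (w - μ)) * K μ
        + Bl μ * hseq w L (c * (1 - starRingEnd ℂ μ * w) / (w - μ))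

def gseq (w : ℂ) : List ℂ → ℂ → PowerSeries ℂ
  | [], c => - PowerSeries.C c
  | μ :: L, c => K μ * gseq w L (c * (1 - starRingEnd ℂ μ * w) / (w - μ))

def Θ (w : ℂ) : List ℂ → ℝ
  | [] => 0
  | μ :: L => (1 - ‖μ‖ ^ 2) / ‖w - μ‖ ^ 2
      + ‖(1 - starRingEnd ℂ μ * w) / (w - μ)‖ ^ 2 * Θ w L

lemma SN_hseq (w : ℂ) (L : List ℂ) (hL : ∀ μ ∈ L, ‖μ‖ < 1) (c : ℂ) : SN (hseq w L c) := by
  induction L generalizing c with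
  | nil => exact SN_zero
  | cons μ L ih =>
      have h1 : ‖μ‖ < 1 := (hL μ (List.mem_cons_self))
      exact SN_add (SN_mul (SN_C _) (SN_K h1))
        (SN_mul (SN_Bl h1) (ih (fun ν hν => hL ν (List.mem_cons_of_mem _ hν)) _))

lemma SN_gseq (w : ℂ) (L : List ℂ) (hL : ∀ μ ∈ L, ‖μ‖ < 1) (c : ℂ) : SN (gseq w L c) := by
  induction L generalizing c with
  | nil => exact SN_neg (SN_C _)
  | cons μ L ih =>
      exact SN_mul (SN_K (hL μ (List.mem_cons_self)))
        (ih (fun ν hν => hL ν (List.mem_cons_of_mem _ hν)) _)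

lemma one_sub_CX_ne_zero (μ : ℂ) :
    (1 - PowerSeries.C (starRingEnd ℂ μ) * PowerSeries.X) ≠ 0 := by
  intro h
  have := congrArg (PowerSeries.constantCoeff) h
  simp at this

lemma hg_identity (w : ℂ) (L : List ℂ) (hL : ∀ μ ∈ L, w ≠ μ) (c : ℂ) :
    (PowerSeries.C w - PowerSeries.X) * hseq w L c - PowerSeries.C c
      = (L.map (fun μ => PowerSeries.X - PowerSeries.C μ)).prod * gseq w L c := by
  induction L generalizing c with
  | nil => simp [hseq, gseq]
  | cons μ L ih =>
      have hwμ : w - μ ≠ 0 := sub_ne_zero.mpr (hL μ (List.mem_cons_self))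
      set α : ℂ := c * (1 - starRingEnd ℂ μ * μ) / (w - μ) with hα
      set c' : ℂ := c * (1 - starRingEnd ℂ μ * w) / (w - μ) with hc'
      have e1 : α * w - c = μ * c' := by
        rw [hα, hc']; field_simp; ring
      have e2 : α - c * starRingEnd ℂ μ = c' := by
        rw [hα, hc']; field_simp; ring
      have E1 : PowerSeries.C α * PowerSeries.C w - PowerSeries.C c
          = PowerSeries.C μ * PowerSeries.C c' := by
        rw [← map_mul, ← map_sub, e1, map_mul]
      have E2 : PowerSeries.C α - PowerSeries.C c * PowerSeries.C (starRingEnd ℂ μ)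
          = PowerSeries.C c' := by
        rw [← map_mul, ← map_sub, e2]
      have key : (PowerSeries.C w - PowerSeries.X) * (PowerSeries.C α * K μ)
          - PowerSeries.C c
          = (PowerSeries.X - PowerSeries.C μ) * K μ * (- PowerSeries.C c') := by
        apply mul_left_cancel₀ (one_sub_CX_ne_zero μ)
        have hK := K_inv μ
        calc (1 - PowerSeries.C (starRingEnd ℂ μ) * PowerSeries.X)
              * ((PowerSeries.C w - PowerSeries.X) * (PowerSeries.C α * K μ)
                - PowerSeries.C c)
            = ((PowerSeries.C w - PowerSeries.X) * PowerSeries.C α)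
                * ((1 - PowerSeries.C (starRingEnd ℂ μ) * PowerSeries.X) * K μ)
              - (1 - PowerSeries.C (starRingEnd ℂ μ) * PowerSeries.X)
                * PowerSeries.C c := by ring
          _ = ((PowerSeries.C w - PowerSeries.X) * PowerSeries.C α)
              - (1 - PowerSeries.C (starRingEnd ℂ μ) * PowerSeries.X)
                * PowerSeries.C c := by rw [hK]; ring
          _ = (PowerSeries.X - PowerSeries.C μ) * (- PowerSeries.C c') := by
              linear_combination E1 - PowerSeries.X * E2
          _ = (1 - PowerSeries.C (starRingEnd ℂ μ) * PowerSeries.X)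
              * ((PowerSeries.X - PowerSeries.C μ) * K μ * (- PowerSeries.C c')) := by
              rw [show (1 - PowerSeries.C (starRingEnd ℂ μ) * PowerSeries.X)
                * ((PowerSeries.X - PowerSeries.C μ) * K μ * (- PowerSeries.C c'))
                = (PowerSeries.X - PowerSeries.C μ) * (- PowerSeries.C c')
                  * ((1 - PowerSeries.C (starRingEnd ℂ μ) * PowerSeries.X) * K μ) from by ring,
                hK]
              ring
      have ihE := ih (fun ν hν => hL ν (List.mem_cons_of_mem _ hν)) c'
      show (PowerSeries.C w - PowerSeries.X)
          * (PowerSeries.C α * K μ + Bl μ * hseq w L c') - PowerSeries.C c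
        = ((PowerSeries.X - PowerSeries.C μ)
            :: L.map (fun ν => PowerSeries.X - PowerSeries.C ν)).prod * (K μ * gseq w L c')
      rw [List.prod_cons, Bl]
      linear_combination key + ((PowerSeries.X - PowerSeries.C μ) * K μ) * ihE

lemma N2_hseq (w : ℂ) (L : List ℂ) (hL : ∀ μ ∈ L, ‖μ‖ < 1 ∧ w ≠ μ) (c : ℂ) :
    N2 (hseq w L c) = ‖c‖ ^ 2 * Θ w L := by
  induction L generalizing c with
  | nil =>
      show N2 0 = ‖c‖ ^ 2 * 0
      rw [mul_zero, N2]
      simp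
  | cons μ L ih =>
      obtain ⟨hμ1, hμ2⟩ := hL μ (List.mem_cons_self)
      have hwμ : w - μ ≠ 0 := sub_ne_zero.mpr hμ2
      have hL' : ∀ ν ∈ L, ‖ν‖ < 1 ∧ w ≠ ν := fun ν hν => hL ν (List.mem_cons_of_mem _ hν)
      have hμpos : (0:ℝ) < 1 - ‖μ‖ ^ 2 := by nlinarith [norm_nonneg μ]
      have hstep := N2_step (α := c * (1 - starRingEnd ℂ μ * μ) / (w - μ)) hμ1
        (SN_hseq w L (fun ν hν => (hL' ν hν).1) (c * (1 - starRingEnd ℂ μ * w) / (w - μ)))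
      show N2 (PowerSeries.C (c * (1 - starRingEnd ℂ μ * μ) / (w - μ)) * K μ
          + Bl μ * hseq w L (c * (1 - starRingEnd ℂ μ * w) / (w - μ)))
        = ‖c‖ ^ 2 * ((1 - ‖μ‖ ^ 2) / ‖w - μ‖ ^ 2
            + ‖(1 - starRingEnd ℂ μ * w) / (w - μ)‖ ^ 2 * Θ w L)
      rw [hstep, ih hL']
      have h1 : (1 : ℂ) - starRingEnd ℂ μ * μ = ((1 - ‖μ‖ ^ 2 : ℝ) : ℂ) := by
        rw [mul_comm, Complex.mul_conj']
        push_cast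
        ring
      have h2 : ‖c * (1 - starRingEnd ℂ μ * μ) / (w - μ)‖ ^ 2
          = ‖c‖ ^ 2 * (1 - ‖μ‖ ^ 2) ^ 2 / ‖w - μ‖ ^ 2 := by
        rw [norm_div, norm_mul, h1, Complex.norm_real, Real.norm_eq_abs,
          abs_of_pos hμpos, div_pow, mul_pow]
      have h3 : ‖c * (1 - starRingEnd ℂ μ * w) / (w - μ)‖ ^ 2
          = ‖c‖ ^ 2 * ‖(1 - starRingEnd ℂ μ * w) / (w - μ)‖ ^ 2 := by
        rw [mul_div_assoc, norm_mul, mul_pow]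
      rw [h2, h3]
      have h4 : (1 - ‖μ‖ ^ 2) ^ 2 * (1 - ‖μ‖ ^ 2)⁻¹ = 1 - ‖μ‖ ^ 2 := by
        field_simp [pow_two]
      linear_combination (‖c‖ ^ 2 / ‖w - μ‖ ^ 2) * h4

lemma Θ_ofFn (w : ℂ) (μs : ℕ → ℂ) (d : ℕ) :
    Θ w (List.ofFn fun i : Fin d => μs i)
      = ∑ k ∈ Finset.range d, (1 - ‖μs k‖ ^ 2) / ‖w - μs k‖ ^ 2
          * ∏ j ∈ Finset.range k, ‖(1 - starRingEnd ℂ (μs j) * w) / (w - μs j)‖ ^ 2 := by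
  induction d generalizing μs with
  | zero => simp [Θ]
  | succ d ih =>
      rw [List.ofFn_succ]
      show (1 - ‖μs 0‖ ^ 2) / ‖w - μs 0‖ ^ 2
          + ‖(1 - starRingEnd ℂ (μs 0) * w) / (w - μs 0)‖ ^ 2
            * Θ w (List.ofFn fun i : Fin d => μs (i.succ : ℕ)) = _
      have hofn : (List.ofFn fun i : Fin d => μs (i.succ : ℕ))
          = List.ofFn fun i : Fin d => μs ((i : ℕ) + 1) := by
        simp [Fin.val_succ]
      rw [hofn, ih (fun m => μs (m + 1)), Finset.sum_range_succ']
      have ht0 : (1 - ‖μs 0‖ ^ 2) / ‖w - μs 0‖ ^ 2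
          * ∏ j ∈ Finset.range 0, ‖(1 - starRingEnd ℂ (μs j) * w) / (w - μs j)‖ ^ 2
          = (1 - ‖μs 0‖ ^ 2) / ‖w - μs 0‖ ^ 2 := by simp
      rw [ht0, Finset.mul_sum]
      have hterm : ∀ k, (1 - ‖μs (k + 1)‖ ^ 2) / ‖w - μs (k + 1)‖ ^ 2
            * ∏ j ∈ Finset.range (k + 1), ‖(1 - starRingEnd ℂ (μs j) * w) / (w - μs j)‖ ^ 2
          = ‖(1 - starRingEnd ℂ (μs 0) * w) / (w - μs 0)‖ ^ 2
            * ((1 - ‖μs (k + 1)‖ ^ 2) / ‖w - μs (k + 1)‖ ^ 2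
              * ∏ j ∈ Finset.range k,
                  ‖(1 - starRingEnd ℂ (μs (j + 1)) * w) / (w - μs (j + 1))‖ ^ 2) := by
        intro k; rw [Finset.prod_range_succ']; ring
      rw [Finset.sum_congr rfl fun k _ => hterm k]
      ring


/-! ### Auxiliary facts -/

lemma rescale_C' (a c : ℂ) : PowerSeries.rescale a (PowerSeries.C c) = PowerSeries.C c := by
  ext n
  rw [PowerSeries.coeff_rescale]
  cases n with
  | zero => simp
  | succ n => simp [PowerSeries.coeff_C]

lemma C_ne_zero' {c : ℂ} (hc : c ≠ 0) : PowerSeries.C c ≠ 0 := by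
  intro h
  have := congrArg (PowerSeries.constantCoeff) h
  simp at this
  exact hc this

lemma prod_Iio_fin {M : Type*} [CommMonoid M] {d : ℕ} (k : Fin d) (g : Fin d → M) (G : ℕ → M)
    (hG : ∀ j : Fin d, G (j : ℕ) = g j) :
    ∏ j ∈ Finset.Iio k, g j = ∏ j ∈ Finset.range (k : ℕ), G j := by
  calc ∏ j ∈ Finset.Iio k, g j = ∏ j ∈ Finset.Iio k, G (j : ℕ) :=
        Finset.prod_congr rfl fun j _ => (hG j).symm
    _ = ∏ j ∈ (Finset.Iio k).map Fin.valEmbedding, G j := by rw [Finset.prod_map]; rfl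
    _ = ∏ j ∈ Finset.range (k : ℕ), G j := by
        rw [Fin.map_valEmbedding_Iio, show Finset.Iio (k : ℕ) = Finset.range (k : ℕ) from by
          ext; simp]

lemma roots_in_disk {E : Type*} [NormedAddCommGroup E] [NormedSpace ℂ E]
    (T : E →L[ℂ] E) (C : ℝ) (hpb : ∀ j : ℕ, ‖T ^ j‖ ≤ C)
    {d : ℕ} (lam : Fin d → ℂ)
    (hmin : minpoly ℂ T = ∏ i : Fin d, (Polynomial.X - Polynomial.C (lam i)))
    (i : Fin d) : ‖lam i‖ ≤ 1 := by
  by_contra hgt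
  push_neg at hgt
  classical
  set q : Polynomial ℂ := ∏ j ∈ Finset.univ.erase i, (Polynomial.X - Polynomial.C (lam j))
    with hq
  have hfac : minpoly ℂ T = (Polynomial.X - Polynomial.C (lam i)) * q := by
    rw [hmin, hq]
    exact (Finset.mul_prod_erase _ _ (Finset.mem_univ i)).symm
  have hqmonic : q.Monic :=
    Polynomial.monic_prod_of_monic _ _ fun j _ => Polynomial.monic_X_sub_C _
  have hqdeg : q.natDegree = d - 1 := by
    rw [hq, Polynomial.natDegree_prod _ _ fun j _ => Polynomial.X_sub_C_ne_zero _]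
    simp [Polynomial.natDegree_X_sub_C, Finset.card_erase_of_mem]
  have hmdeg : (minpoly ℂ T).natDegree = d := by
    rw [hmin, Polynomial.natDegree_prod _ _ fun j _ => Polynomial.X_sub_C_ne_zero _]
    simp [Polynomial.natDegree_X_sub_C]
  have hmonic : (minpoly ℂ T).Monic := by
    rw [hmin]
    exact Polynomial.monic_prod_of_monic _ _ fun j _ => Polynomial.monic_X_sub_C _
  have hqT : Polynomial.aeval T q ≠ 0 := by
    intro h0
    have hle := minpoly.min ℂ T hqmonic h0
    rw [Polynomial.degree_eq_natDegree hmonic.ne_zero,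
      Polynomial.degree_eq_natDegree hqmonic.ne_zero, hmdeg, hqdeg] at hle
    have : d ≤ d - 1 := by exact_mod_cast hle
    have hd0 : 0 < d := i.pos
    omega
  obtain ⟨v, hv⟩ := DFunLike.ne_iff.mp hqT
  simp only [ContinuousLinearMap.zero_apply] at hv
  set y : E := Polynomial.aeval T q v with hy
  have hTy : T y = lam i • y := by
    have h1 := minpoly.aeval ℂ T
    rw [hfac, map_mul] at h1
    have h2 := congrArg (fun (S : E →L[ℂ] E) => S v) h1
    simp only [ContinuousLinearMap.mul_apply, ContinuousLinearMap.zero_apply] at h2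
    rw [map_sub, Polynomial.aeval_X, Polynomial.aeval_C] at h2
    have h3 : (T - algebraMap ℂ (E →L[ℂ] E) (lam i)) y = 0 := h2
    rw [ContinuousLinearMap.sub_apply, sub_eq_zero] at h3
    rw [h3, Algebra.algebraMap_eq_smul_one, ContinuousLinearMap.smul_apply,
      ContinuousLinearMap.one_apply]
  have hpow : ∀ j : ℕ, (T ^ j) y = lam i ^ j • y := by
    intro j
    induction j with
    | zero => simp
    | succ j ih =>
        rw [pow_succ, ContinuousLinearMap.mul_apply, hTy, map_smul, ih, smul_smul, pow_succ]
        ring_nf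
  obtain ⟨j, hj⟩ := pow_unbounded_of_one_lt C hgt
  have h4 : ‖(T ^ j) y‖ ≤ C * ‖y‖ := by
    calc ‖(T ^ j) y‖ ≤ ‖T ^ j‖ * ‖y‖ := (T ^ j).le_opNorm y
      _ ≤ C * ‖y‖ := mul_le_mul_of_nonneg_right (hpb j) (norm_nonneg _)
  rw [hpow j, norm_smul, norm_pow] at h4
  have hy0 : 0 < ‖y‖ := norm_pos_iff.mpr hv
  nlinarith


/-! ### Main construction -/

set_option maxHeartbeats 2000000 in
lemma construction {E : Type*} [NormedAddCommGroup E] [NormedSpace ℂ E] [FiniteDimensional ℂ E]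
    (T : E →L[ℂ] E) (C : ℝ) (hC : 1 ≤ C) (hpb : ∀ j : ℕ, ‖T ^ j‖ ≤ C)
    (d : ℕ) (hd : 0 < d) (lam : Fin d → ℂ)
    (hmin : minpoly ℂ T = ∏ i : Fin d, (Polynomial.X - Polynomial.C (lam i)))
    (ζ : ℂ) (hζ1 : ∀ j, ζ ≠ lam j) (hζ2 : ∀ j, 1 - (starRingEnd ℂ) (lam j) * ζ ≠ 0)
    (ρ : ℝ) (hρ0 : 0 < ρ) (hρ1 : ρ < 1) :
    ∃ S : E →L[ℂ] E, (ζ • 1 - T) * S = 1 ∧ S * (ζ • 1 - T) = 1 ∧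
      ‖S‖ ^ 2 ≤ C ^ 2 / (1 - ρ ^ 2) *
        ∑ k : Fin d, (ρ ^ (2 * (k : ℕ)))⁻¹ *
          ((1 - ρ ^ 2 * ‖lam k‖ ^ 2) / ‖ζ - lam k‖ ^ 2) *
          ∏ j ∈ Finset.Iio k,
            ‖(1 - (starRingEnd ℂ) (lam j) * ζ) / (ζ - lam j) *
              (1 + (1 - (ρ : ℂ) ^ 2) * (starRingEnd ℂ) (lam j) * ζ /
                (1 - (starRingEnd ℂ) (lam j) * ζ))‖ ^ 2 := by
  classical
  have hlam : ∀ i, ‖lam i‖ ≤ 1 := roots_in_disk T C hpb lam hmin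
  set ρc : ℂ := ((ρ : ℝ) : ℂ) with hρc
  have hρcnorm : ‖ρc‖ = ρ := by rw [hρc, Complex.norm_real, Real.norm_eq_abs, abs_of_pos hρ0]
  have hρc0 : ρc ≠ 0 := by
    simp only [hρc, ne_eq, Complex.ofReal_eq_zero]; exact hρ0.ne'
  set w : ℂ := ρc * ζ with hw
  set μf : Fin d → ℂ := fun i => ρc * lam i with hμf
  set L : List ℂ := List.ofFn μf with hLdef
  have hLm : ∀ μ ∈ L, ‖μ‖ < 1 ∧ w ≠ μ := by
    intro μ hμ
    rw [hLdef, List.mem_ofFn] at hμ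
    obtain ⟨i, rfl⟩ := hμ
    constructor
    · rw [hμf]
      calc ‖ρc * lam i‖ = ρ * ‖lam i‖ := by rw [norm_mul, hρcnorm]
        _ ≤ ρ * 1 := mul_le_mul_of_nonneg_left (hlam i) hρ0.le
        _ < 1 := by linarith
    · rw [hμf, hw]
      intro hcon
      exact hζ1 i (mul_left_cancel₀ hρc0 hcon)
  have hLm1 : ∀ μ ∈ L, ‖μ‖ < 1 := fun μ hμ => (hLm μ hμ).1
  have hLm2 : ∀ μ ∈ L, w ≠ μ := fun μ hμ => (hLm μ hμ).2
  set h := hseq w L ρc with hh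
  set g := gseq w L ρc with hg
  have SNh : SN h := SN_hseq w L hLm1 ρc
  have SNg : SN g := SN_gseq w L hLm1 ρc
  have identity := hg_identity w L hLm2 ρc
  have prodL : (L.map fun μ => PowerSeries.X - PowerSeries.C μ).prod
      = ∏ i : Fin d, (PowerSeries.X - PowerSeries.C (μf i)) := by
    rw [hLdef, List.map_ofFn, List.prod_ofFn]
    rfl
  set Mseries : PowerSeries ℂ := ∏ i : Fin d, (PowerSeries.X - PowerSeries.C (lam i))
    with hMs
  have hM : ((minpoly ℂ T : Polynomial ℂ) : PowerSeries ℂ) = Mseries := by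
    rw [hmin, ← Polynomial.coeToPowerSeries.ringHom_apply, map_prod, hMs]
    refine Finset.prod_congr rfl fun i _ => ?_
    rw [Polynomial.coeToPowerSeries.ringHom_apply, Polynomial.coe_sub, Polynomial.coe_X,
      Polynomial.coe_C]
  set H := PowerSeries.rescale ρc h with hH
  set G := PowerSeries.rescale ρc g with hG
  have SNH : SN H := SN_rescale hρ0.le hρ1.le SNh
  have SNG : SN G := SN_rescale hρ0.le hρ1.le SNg
  have SNM : SN Mseries := by rw [← hM]; exact SN_coe_poly _
  -- rescale the identity
  have RID : (PowerSeries.C w - PowerSeries.C ρc * PowerSeries.X) * H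
      - PowerSeries.C ρc = PowerSeries.C (ρc ^ d) * Mseries * G := by
    have hfact : ∀ i : Fin d, PowerSeries.rescale ρc
        (PowerSeries.X - PowerSeries.C (μf i))
        = PowerSeries.C ρc * (PowerSeries.X - PowerSeries.C (lam i)) := by
      intro i
      rw [map_sub, PowerSeries.rescale_X, rescale_C', hμf]
      simp only [map_mul]
      ring
    have eL : PowerSeries.rescale ρc ((PowerSeries.C w - PowerSeries.X) * hseq w L ρc
          - PowerSeries.C ρc)
        = (PowerSeries.C w - PowerSeries.C ρc * PowerSeries.X) * H
          - PowerSeries.C ρc := by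
      rw [map_sub (PowerSeries.rescale ρc)
          ((PowerSeries.C w - PowerSeries.X) * hseq w L ρc) (PowerSeries.C ρc),
        map_mul (PowerSeries.rescale ρc) (PowerSeries.C w - PowerSeries.X) (hseq w L ρc),
        map_sub (PowerSeries.rescale ρc) (PowerSeries.C w) PowerSeries.X,
        rescale_C' ρc w, rescale_C' ρc ρc, PowerSeries.rescale_X, ← hh, ← hH]
    have eR : PowerSeries.rescale ρc
          ((List.map (fun μ => PowerSeries.X - PowerSeries.C μ) L).prod * gseq w L ρc)
        = PowerSeries.C (ρc ^ d) * Mseries * G := by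
      rw [map_mul (PowerSeries.rescale ρc) _ (gseq w L ρc), prodL,
        map_prod (PowerSeries.rescale ρc) (fun i => PowerSeries.X - PowerSeries.C (μf i))
          Finset.univ,
        Finset.prod_congr rfl fun i _ => hfact i, Finset.prod_mul_distrib, Finset.prod_const,
        Finset.card_univ, Fintype.card_fin, ← map_pow, ← hg, ← hG, hMs]
    rw [← eL, ← eR]
    exact congrArg _ identity
  have IDH : (PowerSeries.C ζ - PowerSeries.X) * H - 1
      = PowerSeries.C (ρc ^ (d - 1)) * Mseries * G := by
    apply mul_left_cancel₀ (C_ne_zero' hρc0)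
    have hpows : ρc * ρc ^ (d - 1) = ρc ^ d := by
      rw [← pow_succ']
      congr 1
      omega
    calc PowerSeries.C ρc * ((PowerSeries.C ζ - PowerSeries.X) * H - 1)
        = (PowerSeries.C w - PowerSeries.C ρc * PowerSeries.X) * H
            - PowerSeries.C ρc := by
          rw [hw, map_mul]; ring
      _ = PowerSeries.C (ρc ^ d) * Mseries * G := RID
      _ = PowerSeries.C ρc * (PowerSeries.C (ρc ^ (d - 1)) * Mseries * G) := by
          rw [← hpows, map_mul]; ring
  -- evaluate at T
  have hb : ∀ m : ℕ, ‖T ^ m‖ ≤ C := hpb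
  set S : E →L[ℂ] E := pev T H with hS
  have hMT : pev T Mseries = 0 := by rw [← hM, pev_coe_poly, minpoly.aeval]
  have hζX : pev T (PowerSeries.C ζ - PowerSeries.X) = ζ • 1 - T := by
    rw [pev_sub hb (SN_C ζ) SN_X, pev_C, pev_X]
  have hpevRHS : pev T (PowerSeries.C (ρc ^ (d - 1)) * Mseries * G) = 0 := by
    rw [pev_mul hb (SN_mul (SN_C _) SNM) SNG, pev_mul hb (SN_C _) SNM, hMT]
    simp
  have eq1 : (ζ • 1 - T) * S = 1 := by
    have E2 := congrArg (pev T) IDH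
    rw [pev_sub hb (SN_mul (SN_sub (SN_C ζ) SN_X) SNH) SN_one,
      pev_mul hb (SN_sub (SN_C ζ) SN_X) SNH, hζX, pev_one, hpevRHS, ← hS] at E2
    have := sub_eq_zero.mp E2
    exact this
  have eq2 : S * (ζ • 1 - T) = 1 := by
    have hcomm : H * (PowerSeries.C ζ - PowerSeries.X)
        = (PowerSeries.C ζ - PowerSeries.X) * H := mul_comm _ _
    have E3 : pev T (H * (PowerSeries.C ζ - PowerSeries.X))
        = pev T ((PowerSeries.C ζ - PowerSeries.X) * H) := by rw [hcomm]
    rw [pev_mul hb SNH (SN_sub (SN_C ζ) SN_X), pev_mul hb (SN_sub (SN_C ζ) SN_X) SNH,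
      hζX, ← hS] at E3
    rw [E3]
    have E2 := congrArg (pev T) IDH
    rw [pev_sub hb (SN_mul (SN_sub (SN_C ζ) SN_X) SNH) SN_one,
      pev_mul hb (SN_sub (SN_C ζ) SN_X) SNH, hζX, pev_one, hpevRHS, ← hS] at E2
    exact sub_eq_zero.mp E2
  refine ⟨S, eq1, eq2, ?_⟩
  -- ### the norm bound
  have hρ2 : ρ ^ 2 < 1 := by nlinarith
  have hρ2pos : (0:ℝ) < 1 - ρ ^ 2 := by linarith
  -- coefficients of H
  have hcoeffH : ∀ m, ‖(PowerSeries.coeff m) H‖ = ‖(PowerSeries.coeff m) h‖ * ρ ^ m := by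
    intro m
    rw [hH, PowerSeries.coeff_rescale, norm_mul, norm_pow, hρcnorm]
    ring
  set P : ℝ := ∑' m, ‖(PowerSeries.coeff m) h‖ * ρ ^ m with hP
  have s1 : Summable fun m => ‖(PowerSeries.coeff m) h‖ * ρ ^ m := by
    refine Summable.of_nonneg_of_le (fun m => by positivity) (fun m => ?_) SNh
    calc ‖(PowerSeries.coeff m) h‖ * ρ ^ m ≤ ‖(PowerSeries.coeff m) h‖ * 1 := by
          apply mul_le_mul_of_nonneg_left _ (norm_nonneg _)
          exact pow_le_one₀ hρ0.le hρ1.le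
      _ = _ := mul_one _
  have hSnorm : ‖S‖ ≤ C * P := by
    calc ‖S‖ ≤ ∑' m, ‖(PowerSeries.coeff m) H • T ^ m‖ :=
          norm_tsum_le_tsum_norm (summable_norm_coeff_smul hb SNH)
      _ ≤ ∑' m, C * (‖(PowerSeries.coeff m) h‖ * ρ ^ m) := by
          refine Summable.tsum_le_tsum (fun m => ?_) (summable_norm_coeff_smul hb SNH) (s1.mul_left C)
          rw [norm_coeff_smul, hcoeffH]
          calc ‖(PowerSeries.coeff m) h‖ * ρ ^ m * ‖T ^ m‖
              ≤ ‖(PowerSeries.coeff m) h‖ * ρ ^ m * C := by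
                apply mul_le_mul_of_nonneg_left (hb m) (by positivity)
            _ = C * (‖(PowerSeries.coeff m) h‖ * ρ ^ m) := by ring
      _ = C * P := by rw [tsum_mul_left]
  have hN2nonneg : 0 ≤ N2 h := tsum_nonneg fun m => sq_nonneg _
  have hPnonneg : 0 ≤ P := tsum_nonneg fun m => by positivity
  have hgeo2 : Summable fun m : ℕ => (ρ ^ 2) ^ m :=
    summable_geometric_of_lt_one (by positivity) hρ2
  have hP2 : P ^ 2 ≤ N2 h * (1 - ρ ^ 2)⁻¹ := by
    have hfin : ∀ s : Finset ℕ, (∑ m ∈ s, ‖(PowerSeries.coeff m) h‖ * ρ ^ m)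
        ≤ Real.sqrt (N2 h) * Real.sqrt ((1 - ρ ^ 2)⁻¹) := by
      intro s
      have h1 : (∑ m ∈ s, ‖(PowerSeries.coeff m) h‖ * ρ ^ m) ^ 2
          ≤ (∑ m ∈ s, ‖(PowerSeries.coeff m) h‖ ^ 2) * ∑ m ∈ s, (ρ ^ m) ^ 2 :=
        Finset.sum_mul_sq_le_sq_mul_sq s _ _
      have h2 : (∑ m ∈ s, ‖(PowerSeries.coeff m) h‖ ^ 2) ≤ N2 h :=
        Summable.sum_le_tsum s (fun m _ => sq_nonneg _) (sq_summable SNh)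
      have h3 : (∑ m ∈ s, (ρ ^ m) ^ 2) ≤ (1 - ρ ^ 2)⁻¹ := by
        have h4 : (∑ m ∈ s, (ρ ^ m) ^ 2) = ∑ m ∈ s, (ρ ^ 2) ^ m := by
          refine Finset.sum_congr rfl fun m _ => ?_
          rw [← pow_mul, ← pow_mul, mul_comm]
        rw [h4, ← tsum_geometric_of_lt_one (by positivity : (0:ℝ) ≤ ρ ^ 2) hρ2]
        exact Summable.sum_le_tsum s (fun m _ => by positivity) hgeo2
      have h5 : (∑ m ∈ s, ‖(PowerSeries.coeff m) h‖ * ρ ^ m) ^ 2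
          ≤ N2 h * (1 - ρ ^ 2)⁻¹ := by
        calc (∑ m ∈ s, ‖(PowerSeries.coeff m) h‖ * ρ ^ m) ^ 2
            ≤ (∑ m ∈ s, ‖(PowerSeries.coeff m) h‖ ^ 2) * ∑ m ∈ s, (ρ ^ m) ^ 2 := h1
          _ ≤ N2 h * (1 - ρ ^ 2)⁻¹ := by
              apply mul_le_mul h2 h3 (Finset.sum_nonneg fun m _ => by positivity) hN2nonneg
        
      have h6 : (0:ℝ) ≤ ∑ m ∈ s, ‖(PowerSeries.coeff m) h‖ * ρ ^ m :=
        Finset.sum_nonneg fun m _ => by positivity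
      calc (∑ m ∈ s, ‖(PowerSeries.coeff m) h‖ * ρ ^ m)
          = Real.sqrt ((∑ m ∈ s, ‖(PowerSeries.coeff m) h‖ * ρ ^ m) ^ 2) :=
            (Real.sqrt_sq h6).symm
        _ ≤ Real.sqrt (N2 h * (1 - ρ ^ 2)⁻¹) := Real.sqrt_le_sqrt h5
        _ = Real.sqrt (N2 h) * Real.sqrt ((1 - ρ ^ 2)⁻¹) := Real.sqrt_mul hN2nonneg _
    have hPle : P ≤ Real.sqrt (N2 h) * Real.sqrt ((1 - ρ ^ 2)⁻¹) :=
      Summable.tsum_le_of_sum_le s1 hfin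
    calc P ^ 2 ≤ (Real.sqrt (N2 h) * Real.sqrt ((1 - ρ ^ 2)⁻¹)) ^ 2 :=
          pow_le_pow_left₀ hPnonneg hPle 2
      _ = N2 h * (1 - ρ ^ 2)⁻¹ := by
          rw [mul_pow, Real.sq_sqrt hN2nonneg, Real.sq_sqrt (by positivity)]
  have hSnorm2 : ‖S‖ ^ 2 ≤ C ^ 2 * (N2 h * (1 - ρ ^ 2)⁻¹) := by
    calc ‖S‖ ^ 2 ≤ (C * P) ^ 2 := pow_le_pow_left₀ (norm_nonneg _) hSnorm 2
      _ = C ^ 2 * P ^ 2 := by ring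
      _ ≤ C ^ 2 * (N2 h * (1 - ρ ^ 2)⁻¹) := by
          apply mul_le_mul_of_nonneg_left hP2 (by positivity)
  -- ### computing N2 h
  have hN2 : N2 h = ρ ^ 2 * Θ w L := by
    rw [hh, N2_hseq w L hLm ρc, hρcnorm]
  -- ### translate Θ to the explicit sum
  set lamext : ℕ → ℂ := fun m => if hm : m < d then lam ⟨m, hm⟩ else 0 with hlamext
  have hlamext_fin : ∀ j : Fin d, lamext (j : ℕ) = lam j := by
    intro j
    rw [hlamext]
    simp [j.isLt]
  set μs : ℕ → ℂ := fun m => ρc * lamext m with hμs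
  have hLμs : L = List.ofFn fun i : Fin d => μs (i : ℕ) := by
    rw [hLdef]
    congr 1
    funext i
    simp only [hμs, hμf]
    rw [hlamext_fin i]
  have hΘ : Θ w L = ∑ k ∈ Finset.range d, (1 - ‖μs k‖ ^ 2) / ‖w - μs k‖ ^ 2
      * ∏ j ∈ Finset.range k, ‖(1 - starRingEnd ℂ (μs j) * w) / (w - μs j)‖ ^ 2 := by
    rw [hLμs]
    exact Θ_ofFn w μs d
  -- big expression for j < d
  have hbig : ∀ j : Fin d,
      (1 - (starRingEnd ℂ) (lam j) * ζ) / (ζ - lam j) *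
        (1 + (1 - (ρ : ℂ) ^ 2) * (starRingEnd ℂ) (lam j) * ζ / (1 - (starRingEnd ℂ) (lam j) * ζ))
      = (1 - ρc ^ 2 * (starRingEnd ℂ) (lam j) * ζ) / (ζ - lam j) := by
    intro j
    have h1 : ζ - lam j ≠ 0 := sub_ne_zero.mpr (hζ1 j)
    have h2 := hζ2 j
    rw [hρc]
    field_simp
    ring
  -- Θ factor vs big factor
  have hfac2 : ∀ j : Fin d,
      ‖(1 - starRingEnd ℂ (μs (j:ℕ)) * w) / (w - μs (j:ℕ))‖ ^ 2
      = ‖(1 - (starRingEnd ℂ) (lam j) * ζ) / (ζ - lam j) *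
          (1 + (1 - (ρ : ℂ) ^ 2) * (starRingEnd ℂ) (lam j) * ζ /
            (1 - (starRingEnd ℂ) (lam j) * ζ))‖ ^ 2 * (ρ ^ 2)⁻¹ := by
    intro j
    have h1 : ζ - lam j ≠ 0 := sub_ne_zero.mpr (hζ1 j)
    have h3 : (1 - starRingEnd ℂ (μs (j:ℕ)) * w) / (w - μs (j:ℕ))
        = ((1 - ρc ^ 2 * (starRingEnd ℂ) (lam j) * ζ) / (ζ - lam j)) * ρc⁻¹ := by
      simp only [hμs]
      rw [hlamext_fin j, hw]
      rw [map_mul, Complex.conj_ofReal, ← hρc]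
      have h4 : ρc * ζ - ρc * lam j ≠ 0 := by
        rw [← mul_sub]; exact mul_ne_zero hρc0 h1
      field_simp
    rw [h3, hbig j, norm_mul, mul_pow, norm_inv, hρcnorm, inv_pow]
  -- per-term identity
  have hterm : ∀ k : Fin d,
      (ρ ^ (2 * (k : ℕ)))⁻¹ * ((1 - ρ ^ 2 * ‖lam k‖ ^ 2) / ‖ζ - lam k‖ ^ 2) *
        ∏ j ∈ Finset.Iio k,
          ‖(1 - (starRingEnd ℂ) (lam j) * ζ) / (ζ - lam j) *
            (1 + (1 - (ρ : ℂ) ^ 2) * (starRingEnd ℂ) (lam j) * ζ /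
              (1 - (starRingEnd ℂ) (lam j) * ζ))‖ ^ 2
      = ρ ^ 2 * ((1 - ‖μs (k:ℕ)‖ ^ 2) / ‖w - μs (k:ℕ)‖ ^ 2
          * ∏ j ∈ Finset.range (k:ℕ),
              ‖(1 - starRingEnd ℂ (μs j) * w) / (w - μs j)‖ ^ 2) := by
    intro k
    have hζk : ζ - lam k ≠ 0 := sub_ne_zero.mpr (hζ1 k)
    have hnζk : (0:ℝ) < ‖ζ - lam k‖ ^ 2 := by
      have := norm_pos_iff.mpr hζk
      positivity
    -- first factor
    have c1 : ‖μs (k:ℕ)‖ ^ 2 = ρ ^ 2 * ‖lam k‖ ^ 2 := by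
      simp only [hμs]
      rw [hlamext_fin k, norm_mul, hρcnorm, mul_pow]
    have c2 : ‖w - μs (k:ℕ)‖ ^ 2 = ρ ^ 2 * ‖ζ - lam k‖ ^ 2 := by
      simp only [hμs]
      rw [hlamext_fin k, hw, ← mul_sub, norm_mul, hρcnorm, mul_pow]
    -- product over range k
    have c3 : (∏ j ∈ Finset.range (k:ℕ),
        ‖(1 - starRingEnd ℂ (μs j) * w) / (w - μs j)‖ ^ 2)
        = (∏ j ∈ Finset.Iio k,
            ‖(1 - (starRingEnd ℂ) (lam j) * ζ) / (ζ - lam j) *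
              (1 + (1 - (ρ : ℂ) ^ 2) * (starRingEnd ℂ) (lam j) * ζ /
                (1 - (starRingEnd ℂ) (lam j) * ζ))‖ ^ 2) * ((ρ ^ 2)⁻¹) ^ (k:ℕ) := by
      have c4 := prod_Iio_fin k
        (fun j : Fin d =>
          ‖(1 - (starRingEnd ℂ) (lam j) * ζ) / (ζ - lam j) *
            (1 + (1 - (ρ : ℂ) ^ 2) * (starRingEnd ℂ) (lam j) * ζ /
              (1 - (starRingEnd ℂ) (lam j) * ζ))‖ ^ 2 * (ρ ^ 2)⁻¹)
        (fun j : ℕ => ‖(1 - starRingEnd ℂ (μs j) * w) / (w - μs j)‖ ^ 2)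
        (fun j => hfac2 j)
      rw [← c4, Finset.prod_mul_distrib, Finset.prod_const, Fin.card_Iio]
    rw [c1, c2, c3]
    have hρ2ne : (ρ:ℝ) ^ 2 ≠ 0 := by positivity
    have hpowne : (ρ:ℝ) ^ (2 * (k:ℕ)) ≠ 0 := by positivity
    rw [show ((ρ ^ 2)⁻¹ : ℝ) ^ (k:ℕ) = (ρ ^ (2 * (k:ℕ)))⁻¹ by
      rw [inv_pow, ← pow_mul]]
    generalize (∏ j ∈ Finset.Iio k,
        ‖(1 - (starRingEnd ℂ) (lam j) * ζ) / (ζ - lam j) *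
          (1 + (1 - (ρ : ℂ) ^ 2) * (starRingEnd ℂ) (lam j) * ζ /
            (1 - (starRingEnd ℂ) (lam j) * ζ))‖ ^ 2 : ℝ) = Pk
    field_simp [hρ0.ne']
  -- assemble the sum identity
  have hsum : (∑ k : Fin d, (ρ ^ (2 * (k : ℕ)))⁻¹ *
        ((1 - ρ ^ 2 * ‖lam k‖ ^ 2) / ‖ζ - lam k‖ ^ 2) *
        ∏ j ∈ Finset.Iio k,
          ‖(1 - (starRingEnd ℂ) (lam j) * ζ) / (ζ - lam j) *
            (1 + (1 - (ρ : ℂ) ^ 2) * (starRingEnd ℂ) (lam j) * ζ /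
              (1 - (starRingEnd ℂ) (lam j) * ζ))‖ ^ 2)
      = ρ ^ 2 * Θ w L := by
    calc (∑ k : Fin d, (ρ ^ (2 * (k : ℕ)))⁻¹ *
          ((1 - ρ ^ 2 * ‖lam k‖ ^ 2) / ‖ζ - lam k‖ ^ 2) *
          ∏ j ∈ Finset.Iio k,
            ‖(1 - (starRingEnd ℂ) (lam j) * ζ) / (ζ - lam j) *
              (1 + (1 - (ρ : ℂ) ^ 2) * (starRingEnd ℂ) (lam j) * ζ /
                (1 - (starRingEnd ℂ) (lam j) * ζ))‖ ^ 2)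
        = ∑ k : Fin d, ρ ^ 2 * ((1 - ‖μs (k:ℕ)‖ ^ 2) / ‖w - μs (k:ℕ)‖ ^ 2
            * ∏ j ∈ Finset.range (k:ℕ),
                ‖(1 - starRingEnd ℂ (μs j) * w) / (w - μs j)‖ ^ 2) :=
          Finset.sum_congr rfl fun k _ => hterm k
      _ = ∑ k ∈ Finset.range d, ρ ^ 2 * ((1 - ‖μs k‖ ^ 2) / ‖w - μs k‖ ^ 2
            * ∏ j ∈ Finset.range k,
                ‖(1 - starRingEnd ℂ (μs j) * w) / (w - μs j)‖ ^ 2) := by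
          exact Fin.sum_univ_eq_sum_range (fun m => ρ ^ 2 * ((1 - ‖μs m‖ ^ 2) / ‖w - μs m‖ ^ 2
            * ∏ j ∈ Finset.range m,
                ‖(1 - starRingEnd ℂ (μs j) * w) / (w - μs j)‖ ^ 2)) d
      _ = ρ ^ 2 * ∑ k ∈ Finset.range d, ((1 - ‖μs k‖ ^ 2) / ‖w - μs k‖ ^ 2
            * ∏ j ∈ Finset.range k,
                ‖(1 - starRingEnd ℂ (μs j) * w) / (w - μs j)‖ ^ 2) :=
          (Finset.mul_sum _ _ _).symm
      _ = ρ ^ 2 * Θ w L := by rw [hΘ]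
  rw [hsum]
  calc ‖S‖ ^ 2 ≤ C ^ 2 * (N2 h * (1 - ρ ^ 2)⁻¹) := hSnorm2
    _ = C ^ 2 / (1 - ρ ^ 2) * (ρ ^ 2 * Θ w L) := by
        rw [hN2, div_eq_mul_inv]; ring

end RSB

/-- the main lemma: If T is power bounded by C with minimal polynomial
∏_{i=1}^d (z−λ_i) and ζ avoids the roots λ_j and the points 1/conj(λ_j), then ζI − T is
invertible and for every ρ ∈ (0,1),
‖(ζI−T)⁻¹‖² ≤ (C²/(1−ρ²))·∑_{k=1}^d ρ^{−(2k−2)}·(1−ρ²|λ_k|²)/|ζ−λ_k|²·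
∏_{j<k} |(1−conj(λ_j)ζ)/(ζ−λ_j)·(1+(1−ρ²)conj(λ_j)ζ/(1−conj(λ_j)ζ))|². -/
theorem resolvent_squared_bound_main_lemma
    {E : Type*} [NormedAddCommGroup E] [NormedSpace ℂ E] [FiniteDimensional ℂ E]
    (n : ℕ) (hn : 1 ≤ n) (hdim : Module.finrank ℂ E = n)
    (T : E →L[ℂ] E) (C : ℝ) (hC : 1 ≤ C) (hpb : ∀ j : ℕ, ‖T ^ j‖ ≤ C)
    (d : ℕ) (hd : 0 < d) (lam : Fin d → ℂ)
    (hmin : minpoly ℂ T = ∏ i : Fin d, (Polynomial.X - Polynomial.C (lam i)))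
    (ζ : ℂ) (hζ1 : ∀ j, ζ ≠ lam j) (hζ2 : ∀ j, 1 - (starRingEnd ℂ) (lam j) * ζ ≠ 0) :
    ∃ S : E →L[ℂ] E, (ζ • 1 - T) * S = 1 ∧ S * (ζ • 1 - T) = 1 ∧
      ∀ ρ : ℝ, 0 < ρ → ρ < 1 →
        ‖S‖ ^ 2 ≤ C ^ 2 / (1 - ρ ^ 2) *
          ∑ k : Fin d, (ρ ^ (2 * (k : ℕ)))⁻¹ *
            ((1 - ρ ^ 2 * ‖lam k‖ ^ 2) / ‖ζ - lam k‖ ^ 2) *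
            ∏ j ∈ Finset.Iio k,
              ‖(1 - (starRingEnd ℂ) (lam j) * ζ) / (ζ - lam j) *
                (1 + (1 - (ρ : ℂ) ^ 2) * (starRingEnd ℂ) (lam j) * ζ /
                  (1 - (starRingEnd ℂ) (lam j) * ζ))‖ ^ 2 := by
  obtain ⟨S, h1, h2, _⟩ := RSB.construction T C hC hpb d hd lam hmin ζ hζ1 hζ2
    (1/2) (by norm_num) (by norm_num)
  refine ⟨S, h1, h2, ?_⟩
  intro ρ hρ0 hρ1
  obtain ⟨S', g1, g2, g3⟩ := RSB.construction T C hC hpb d hd lam hmin ζ hζ1 hζ2 ρ hρ0 hρ1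
  have hSS : S' = S := by
    calc S' = S' * ((ζ • 1 - T) * S) := by rw [h1, mul_one]
      _ = (S' * (ζ • 1 - T)) * S := by rw [mul_assoc]
      _ = S := by rw [g2, one_mul]
  rw [← hSS]
  exact g3
end
end
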